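/- arXiv:2402.17094 — 5 statements merged into one kernel-verified Lean document; each statement's English description precedes it below -/
import Mathlib

section
/- Let $\{v_n\}_{n=0}^{N-1}$ be a finite sequence of complex numbers and let $H$ be an integer with $0 \le H \le N-1$. Then $\left|\frac{1}{N}\sum_{n=0}^{N-1} v_n\right|^2 \le \frac{N+H}{N^2(H+1)}\sum_{n=0}^{N-1}|v_n|^2 + \frac{2(N+H)}{N^2(H+1)^2}\sum_{h=1}^{H}(H+1-h)\,\mathrm{Re}\left(\sum_{n=0}^{N-h-1}\overline{v_{n+h}}\,v_n\right)$. -/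
open Finset

namespace VDC

variable (N H : ℕ) (v : ℕ → ℂ)

/-- `v` extended by zero to `ℤ`. -/
def uu : ℤ → ℂ := fun k => if 0 ≤ k ∧ k < (N : ℤ) then v k.toNat else 0

lemma uu_nat (k : ℕ) (hk : k < N) : uu N v (k : ℤ) = v k := by
  simp [uu, hk]

lemma uu_zero (k : ℤ) (hk : ¬(0 ≤ k ∧ k < (N : ℤ))) : uu N v k = 0 := by
  simp [uu, hk]

/-- windowed sums. -/
noncomputable def ww : ℕ → ℂ := fun n => ∑ h ∈ range (H + 1), uu N v ((n : ℤ) - (h : ℤ))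

lemma sum_ww : ∑ n ∈ range (N + H), ww N H v n
    = ((H : ℂ) + 1) * ∑ n ∈ range N, v n := by
  unfold ww
  rw [Finset.sum_comm]
  have key : ∀ h ∈ range (H + 1),
      ∑ n ∈ range (N + H), uu N v ((n : ℤ) - (h : ℤ)) = ∑ n ∈ range N, v n := by
    intro h hh
    rw [mem_range] at hh
    have hsub : Ico h (N + h) ⊆ range (N + H) := by
      intro x hx; rw [mem_Ico] at hx; rw [mem_range]; omega
    rw [← Finset.sum_subset hsub]
    · rw [Finset.sum_Ico_eq_sum_range]
      have : N + h - h = N := by omega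
      rw [this]
      apply Finset.sum_congr rfl
      intro k hk
      rw [mem_range] at hk
      have : ((h + k : ℕ) : ℤ) - (h : ℤ) = (k : ℤ) := by push_cast; ring
      rw [this, uu_nat N v k hk]
    · intro x hx hx'
      rw [mem_range] at hx; rw [mem_Ico] at hx'
      apply uu_zero
      rintro ⟨h1, h2⟩
      omega
  rw [Finset.sum_congr rfl key, Finset.sum_const, card_range, nsmul_eq_mul]
  push_cast; ring

/-- the correlation sums. -/
noncomputable def CC (h : ℕ) : ℂ :=
  ∑ n ∈ range (N - h), (starRingEnd ℂ) (v (n + h)) * v n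

lemma T_eq (hHN : H < N) (h1 h2 : ℕ) (hh1 : h1 ≤ H) (hh2 : h2 ≤ h1) :
    ∑ n ∈ range (N + H),
        (starRingEnd ℂ) (uu N v ((n : ℤ) - (h1 : ℤ))) * uu N v ((n : ℤ) - (h2 : ℤ))
      = ∑ k ∈ range (N - (h1 - h2)),
          (starRingEnd ℂ) (v k) * v (k + (h1 - h2)) := by
  set d := h1 - h2 with hd
  have hsub : Ico h1 (N + h2) ⊆ range (N + H) := by
    intro x hx; rw [mem_Ico] at hx; rw [mem_range]; omega
  rw [← Finset.sum_subset hsub]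
  · rw [Finset.sum_Ico_eq_sum_range]
    have : N + h2 - h1 = N - d := by omega
    rw [this]
    apply Finset.sum_congr rfl
    intro k hk
    rw [mem_range] at hk
    have e1 : ((h1 + k : ℕ) : ℤ) - (h1 : ℤ) = ((k : ℕ) : ℤ) := by push_cast; ring
    have e2 : ((h1 + k : ℕ) : ℤ) - (h2 : ℤ) = ((k + d : ℕ) : ℤ) := by push_cast; omega
    rw [e1, e2, uu_nat N v k (by omega), uu_nat N v (k + d) (by omega)]
  · intro x hx hx'
    rw [mem_range] at hx; rw [mem_Ico] at hx'
    rcases Nat.lt_or_ge x h1 with h | h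
    · have : uu N v ((x : ℤ) - (h1 : ℤ)) = 0 := by
        apply uu_zero; rintro ⟨a, b⟩; omega
      rw [this, map_zero, zero_mul]
    · have : uu N v ((x : ℤ) - (h2 : ℤ)) = 0 := by
        apply uu_zero; rintro ⟨a, b⟩; omega
      rw [this, mul_zero]

lemma reT (hHN : H < N) (h1 h2 : ℕ) (hh1 : h1 ≤ H) (hh2 : h2 ≤ H) :
    (∑ n ∈ range (N + H),
        (starRingEnd ℂ) (uu N v ((n : ℤ) - (h1 : ℤ))) * uu N v ((n : ℤ) - (h2 : ℤ))).re
      = if h1 = h2 then ∑ k ∈ range N, ‖v k‖ ^ 2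
        else (CC N v (max h1 h2 - min h1 h2)).re := by
  rcases le_total h2 h1 with hle | hle
  · rw [T_eq N H v hHN h1 h2 hh1 hle]
    rcases eq_or_ne h1 h2 with he | he
    · subst he
      simp only [if_pos rfl, Nat.sub_self, Nat.sub_zero, add_zero]
      rw [Complex.re_sum]
      apply Finset.sum_congr rfl
      intro k _
      rw [Complex.sq_norm, ← Complex.normSq_eq_conj_mul_self, Complex.ofReal_re]
    · rw [if_neg he]
      have hmax : max h1 h2 - min h1 h2 = h1 - h2 := by omega
      rw [hmax]
      have : CC N v (h1 - h2)
          = (starRingEnd ℂ) (∑ k ∈ range (N - (h1 - h2)),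
              (starRingEnd ℂ) (v k) * v (k + (h1 - h2))) := by
        rw [map_sum]
        unfold CC
        apply Finset.sum_congr rfl
        intro k _
        rw [map_mul, Complex.conj_conj]
        ring
      rw [this, Complex.conj_re]
  · -- h1 ≤ h2 : conjugate of the other case
    rcases eq_or_ne h1 h2 with he | he
    · subst he
      simp only [if_pos rfl]
      rw [T_eq N H v hHN h1 h1 hh1 le_rfl]
      simp only [Nat.sub_self, Nat.sub_zero, add_zero]
      rw [Complex.re_sum]
      apply Finset.sum_congr rfl
      intro k _
      rw [Complex.sq_norm, ← Complex.normSq_eq_conj_mul_self, Complex.ofReal_re]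
    · rw [if_neg he]
      have hconj : ∑ n ∈ range (N + H),
          (starRingEnd ℂ) (uu N v ((n : ℤ) - (h1 : ℤ))) * uu N v ((n : ℤ) - (h2 : ℤ))
          = (starRingEnd ℂ) (∑ n ∈ range (N + H),
              (starRingEnd ℂ) (uu N v ((n : ℤ) - (h2 : ℤ))) * uu N v ((n : ℤ) - (h1 : ℤ))) := by
        rw [map_sum]
        apply Finset.sum_congr rfl
        intro n _
        rw [map_mul, Complex.conj_conj]
        ring
      rw [hconj, Complex.conj_re, T_eq N H v hHN h2 h1 hh2 hle]
      have hmax : max h1 h2 - min h1 h2 = h2 - h1 := by omega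
      rw [hmax]
      have : CC N v (h2 - h1)
          = (starRingEnd ℂ) (∑ k ∈ range (N - (h2 - h1)),
              (starRingEnd ℂ) (v k) * v (k + (h2 - h1))) := by
        rw [map_sum]
        unfold CC
        apply Finset.sum_congr rfl
        intro k _
        rw [map_mul, Complex.conj_conj]
        ring
      rw [this, Complex.conj_re]

lemma count_aux (f : ℕ → ℝ) (m : ℕ) :
    ∑ h1 ∈ range m, ∑ h2 ∈ range h1, f (h1 - h2)
      = ∑ d ∈ Icc 1 (m - 1), ((m : ℝ) - (d : ℝ)) * f d := by
  induction m with
  | zero => simp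
  | succ m ih =>
    rw [Finset.sum_range_succ, ih]
    have step : ∑ h2 ∈ range m, f (m - h2) = ∑ d ∈ Icc 1 m, f d := by
      have : Icc 1 m = Ico 1 (m + 1) := by rw [Finset.Ico_add_one_right_eq_Icc]
      rw [this, Finset.sum_Ico_eq_sum_range]
      have : m + 1 - 1 = m := by omega
      rw [this, ← Finset.sum_range_reflect]
      apply Finset.sum_congr rfl
      intro j hj
      rw [mem_range] at hj
      congr 1
      omega
    rw [step]
    rcases Nat.eq_zero_or_pos m with hm | hm
    · subst hm; simp
    · have h1 : Nat.succ m - 1 = m := by omega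
      have h2 : Icc 1 m = insert m (Icc 1 (m - 1)) := by
        ext x
        simp only [mem_Icc, mem_insert]
        omega
      rw [h1, h2, Finset.sum_insert (by simp; omega), Finset.sum_insert (by simp; omega)]
      have h3 : ∀ x ∈ Icc 1 (m - 1),
          ((m : ℝ) + 1 - (x : ℝ)) * f x = ((m : ℝ) - (x : ℝ)) * f x + f x := by
        intro x _; ring
      push_cast
      rw [Finset.sum_congr rfl h3, Finset.sum_add_distrib]
      ring


lemma sum_ww_sq (hHN : H < N) :
    ∑ n ∈ range (N + H), ‖ww N H v n‖ ^ 2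
      = ((H : ℝ) + 1) * ∑ k ∈ range N, ‖v k‖ ^ 2
        + 2 * ∑ d ∈ Icc 1 H, ((H : ℝ) + 1 - (d : ℝ)) * (CC N v d).re := by
  set A : ℝ := ∑ k ∈ range N, ‖v k‖ ^ 2 with hA
  set g : ℕ → ℝ := fun d => (CC N v d).re with hg
  have step1 : ∑ n ∈ range (N + H), ‖ww N H v n‖ ^ 2
      = ∑ h1 ∈ range (H + 1), ∑ h2 ∈ range (H + 1),
          (∑ n ∈ range (N + H),
            (starRingEnd ℂ) (uu N v ((n : ℤ) - (h1 : ℤ))) * uu N v ((n : ℤ) - (h2 : ℤ))).re := by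
    have e1 : ∀ n ∈ range (N + H), ‖ww N H v n‖ ^ 2
        = ∑ h1 ∈ range (H + 1), ∑ h2 ∈ range (H + 1),
            ((starRingEnd ℂ) (uu N v ((n : ℤ) - (h1 : ℤ))) * uu N v ((n : ℤ) - (h2 : ℤ))).re := by
      intro n _
      rw [Complex.sq_norm,
        show Complex.normSq (ww N H v n)
            = ((starRingEnd ℂ) (ww N H v n) * ww N H v n).re from by
          rw [← Complex.normSq_eq_conj_mul_self, Complex.ofReal_re]]
      unfold ww
      rw [map_sum, Finset.sum_mul_sum, Complex.re_sum]
      apply Finset.sum_congr rfl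
      intro h1 _
      rw [Complex.re_sum]
    rw [Finset.sum_congr rfl e1, Finset.sum_comm]
    apply Finset.sum_congr rfl
    intro h1 _
    rw [Finset.sum_comm]
    apply Finset.sum_congr rfl
    intro h2 _
    rw [Complex.re_sum]
  rw [step1]
  have step2 : ∀ h1 ∈ range (H + 1), ∀ h2 ∈ range (H + 1),
      (∑ n ∈ range (N + H),
        (starRingEnd ℂ) (uu N v ((n : ℤ) - (h1 : ℤ))) * uu N v ((n : ℤ) - (h2 : ℤ))).re
      = if h1 = h2 then A else g (max h1 h2 - min h1 h2) := by
    intro h1 hm1 h2 hm2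
    rw [mem_range] at hm1 hm2
    exact reT N H v hHN h1 h2 (by omega) (by omega)
  have step3 : ∑ h1 ∈ range (H + 1), ∑ h2 ∈ range (H + 1),
      (∑ n ∈ range (N + H),
        (starRingEnd ℂ) (uu N v ((n : ℤ) - (h1 : ℤ))) * uu N v ((n : ℤ) - (h2 : ℤ))).re
      = ∑ h1 ∈ range (H + 1),
          ((∑ h2 ∈ range h1, g (h1 - h2)) + A
            + ∑ h2 ∈ Ico (h1 + 1) (H + 1), g (h2 - h1)) := by
    apply Finset.sum_congr rfl
    intro h1 hm1
    rw [mem_range] at hm1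
    rw [Finset.sum_congr rfl (step2 h1 (mem_range.mpr hm1))]
    have hsplit : range (H + 1) = Ico 0 (H + 1) := by rw [Nat.Ico_zero_eq_range]
    rw [hsplit, ← Finset.sum_Ico_consecutive _ (Nat.zero_le h1) (by omega : h1 ≤ H + 1),
        Finset.sum_eq_sum_Ico_succ_bot (by omega : h1 < H + 1)]
    rw [if_pos rfl, Nat.Ico_zero_eq_range]
    have l1 : ∀ h2 ∈ range h1, (if h1 = h2 then A else g (max h1 h2 - min h1 h2))
        = g (h1 - h2) := by
      intro h2 hm2
      rw [mem_range] at hm2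
      rw [if_neg (by omega)]
      congr 1
      omega
    have l2 : ∀ h2 ∈ Ico (h1 + 1) (H + 1), (if h1 = h2 then A else g (max h1 h2 - min h1 h2))
        = g (h2 - h1) := by
      intro h2 hm2
      rw [mem_Ico] at hm2
      rw [if_neg (by omega)]
      congr 1
      omega
    rw [Finset.sum_congr rfl l1, Finset.sum_congr rfl l2]
    ring
  rw [step3, Finset.sum_add_distrib, Finset.sum_add_distrib, Finset.sum_const, card_range,
      nsmul_eq_mul]
  have upper : ∑ h1 ∈ range (H + 1), ∑ h2 ∈ Ico (h1 + 1) (H + 1), g (h2 - h1)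
      = ∑ h1 ∈ range (H + 1), ∑ h2 ∈ range h1, g (h1 - h2) := by
    rw [← Nat.Ico_zero_eq_range, Finset.sum_Ico_Ico_comm']
    simp only [Nat.Ico_zero_eq_range]
  rw [upper, count_aux]
  have : (H + 1) - 1 = H := by omega
  rw [this]
  push_cast
  ring

end VDC

open VDC in
/-- Van der Corput's estimate for finite sequences of complex numbers. -/
theorem vdc_estimate (N H : ℕ) (hN : 1 ≤ N) (hH : H ≤ N - 1) (v : ℕ → ℂ) :
    ‖(N : ℂ)⁻¹ * ∑ n ∈ range N, v n‖ ^ 2 ≤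
      ((N : ℝ) + (H : ℝ)) / ((N : ℝ) ^ 2 * ((H : ℝ) + 1)) *
          ∑ n ∈ range N, ‖v n‖ ^ 2 +
        2 * ((N : ℝ) + (H : ℝ)) / ((N : ℝ) ^ 2 * ((H : ℝ) + 1) ^ 2) *
          ∑ h ∈ Icc 1 H, ((H : ℝ) + 1 - (h : ℝ)) *
            (∑ n ∈ range (N - h), (starRingEnd ℂ) (v (n + h)) * v n).re := by
  have hHN : H < N := by omega
  set S : ℂ := ∑ n ∈ range N, v n with hS
  set A : ℝ := ∑ n ∈ range N, ‖v n‖ ^ 2 with hA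
  set T : ℝ := ∑ h ∈ Icc 1 H, ((H : ℝ) + 1 - (h : ℝ))
      * (∑ n ∈ range (N - h), (starRingEnd ℂ) (v (n + h)) * v n).re with hT
  set W : ℝ := ∑ n ∈ range (N + H), ‖ww N H v n‖ ^ 2 with hW
  have hNpos : (0 : ℝ) < (N : ℝ) := by exact_mod_cast hN
  have hH1pos : (0 : ℝ) < (H : ℝ) + 1 := by positivity
  have hWT : W = ((H : ℝ) + 1) * A + 2 * T := by
    rw [hW, sum_ww_sq N H v hHN]
    rfl
  -- Cauchy-Schwarz
  have cs : (∑ n ∈ range (N + H), ‖ww N H v n‖) ^ 2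
      ≤ ((N : ℝ) + (H : ℝ)) * W := by
    have := sq_sum_le_card_mul_sum_sq (s := range (N + H))
      (f := fun n => ‖ww N H v n‖)
    rw [card_range] at this
    calc (∑ n ∈ range (N + H), ‖ww N H v n‖) ^ 2
        ≤ ((N + H : ℕ) : ℝ) * ∑ n ∈ range (N + H), ‖ww N H v n‖ ^ 2 := this
      _ = ((N : ℝ) + (H : ℝ)) * W := by rw [hW]; push_cast; ring
  have habs : ‖∑ n ∈ range (N + H), ww N H v n‖
      ≤ ∑ n ∈ range (N + H), ‖ww N H v n‖ :=
    norm_sum_le _ _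
  have hMul : ‖∑ n ∈ range (N + H), ww N H v n‖
      = ((H : ℝ) + 1) * ‖S‖ := by
    rw [sum_ww, norm_mul]
    congr 1
    rw [show ((H : ℂ) + 1) = ((H + 1 : ℕ) : ℂ) by push_cast; ring, Complex.norm_natCast]
    push_cast; ring
  have key : ((H : ℝ) + 1) ^ 2 * ‖S‖ ^ 2 ≤ ((N : ℝ) + (H : ℝ)) * W := by
    calc ((H : ℝ) + 1) ^ 2 * ‖S‖ ^ 2
        = (((H : ℝ) + 1) * ‖S‖) ^ 2 := by ring
      _ = ‖∑ n ∈ range (N + H), ww N H v n‖ ^ 2 := by rw [hMul]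
      _ ≤ (∑ n ∈ range (N + H), ‖ww N H v n‖) ^ 2 := by
          apply pow_le_pow_left₀ (norm_nonneg _) habs
      _ ≤ ((N : ℝ) + (H : ℝ)) * W := cs
  have lhs_eq : ‖(N : ℂ)⁻¹ * S‖ ^ 2 = ‖S‖ ^ 2 / (N : ℝ) ^ 2 := by
    rw [norm_mul, norm_inv, Complex.norm_natCast]
    field_simp
  rw [lhs_eq]
  have rhs_eq : ((N : ℝ) + (H : ℝ)) / ((N : ℝ) ^ 2 * ((H : ℝ) + 1)) * A
        + 2 * ((N : ℝ) + (H : ℝ)) / ((N : ℝ) ^ 2 * ((H : ℝ) + 1) ^ 2) * T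
      = ((N : ℝ) + (H : ℝ)) * W / (((H : ℝ) + 1) ^ 2 * (N : ℝ) ^ 2) := by
    rw [hWT]
    field_simp
  rw [rhs_eq]
  rw [div_le_div_iff₀ (by positivity) (by positivity)]
  calc ‖S‖ ^ 2 * (((H : ℝ) + 1) ^ 2 * (N : ℝ) ^ 2)
      = (((H : ℝ) + 1) ^ 2 * ‖S‖ ^ 2) * (N : ℝ) ^ 2 := by ring
    _ ≤ (((N : ℝ) + (H : ℝ)) * W) * (N : ℝ) ^ 2 := by
        apply mul_le_mul_of_nonneg_right key (by positivity)
    _ = ((N : ℝ) + (H : ℝ)) * W * (N : ℝ) ^ 2 := by ring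
end

section
/- Let $\{u_n\}_{n=0}^{N-1}$ be a finite sequence of complex numbers. Then $\sup_{t\in\mathbb{R}}\left|\sum_{n=0}^{N-1} u_n e^{2\pi i n t}\right|^2 \le 2\sum_{n=0}^{N-1}|u_n|^2 + 4\sum_{h=1}^{N-1}\left|\sum_{n=0}^{N-h-1}\overline{u_{n+h}}\,u_n\right|$. -/
open Finset

lemma vdc_reindex {M : Type*} [AddCommMonoid M] (N : ℕ) (F : ℕ → ℕ → M) :
    ∑ n ∈ range N, ∑ m ∈ range n, F n m
      = ∑ h ∈ Ico 1 N, ∑ m ∈ range (N - h), F (m + h) m := by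
  rw [Finset.sum_sigma', Finset.sum_sigma']
  apply Finset.sum_nbij' (fun x => (⟨x.1 - x.2, x.2⟩ : Σ _ : ℕ, ℕ))
    (fun y => (⟨y.2 + y.1, y.2⟩ : Σ _ : ℕ, ℕ))
  all_goals intro a ha
  all_goals simp only [Finset.mem_sigma, Finset.mem_range, Finset.mem_Ico] at ha ⊢
  · omega
  · omega
  · obtain ⟨a1, a2⟩ := a; simp_all; omega
  · obtain ⟨a1, a2⟩ := a; simp_all
  · congr 1; omega

lemma vdc_split {M : Type*} [AddCommMonoid M] (N : ℕ) (G : ℕ → ℕ → M) :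
    ∑ n ∈ range N, ∑ m ∈ range N, G n m
      = (∑ n ∈ range N, G n n) + ∑ n ∈ range N, ∑ m ∈ range n, (G n m + G m n) := by
  induction N with
  | zero => simp
  | succ k ih =>
    simp only [Finset.sum_range_succ, Finset.sum_add_distrib, ih]
    abel

lemma vdc_pointwise (N : ℕ) (u : ℕ → ℂ) (t : ℝ) :
    ‖∑ n ∈ range N,
        u n * Complex.exp (2 * (Real.pi : ℂ) * Complex.I * (n : ℂ) * (t : ℂ))‖ ^ 2 ≤
      2 * ∑ n ∈ range N, ‖u n‖ ^ 2 +
        4 * ∑ h ∈ Icc 1 (N - 1),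
          ‖∑ n ∈ range (N - h), (starRingEnd ℂ) (u (n + h)) * u n‖ := by
  set a : ℕ → ℂ := fun n => u n * Complex.exp (2 * (Real.pi:ℂ) * Complex.I * (n:ℂ) * (t:ℂ)) with ha
  have habs : ∀ n, ‖a n‖ = ‖u n‖ := by
    intro n
    simp [ha, norm_mul, Complex.norm_exp]
  have hmul : ∀ h m : ℕ, a (m + h) * (starRingEnd ℂ) (a m)
      = (u (m + h) * (starRingEnd ℂ) (u m)) * Complex.exp (2 * (Real.pi:ℂ) * Complex.I * (h:ℂ) * (t:ℂ)) := by
    intro h m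
    simp only [ha, map_mul, ← Complex.exp_conj, Complex.conj_I, Complex.conj_ofReal,
      map_ofNat, map_natCast]
    rw [mul_mul_mul_comm, ← Complex.exp_add]
    congr 1
    push_cast
    ring
  have h1 : (∑ n ∈ range N, a n) * (starRingEnd ℂ) (∑ n ∈ range N, a n)
      = (∑ n ∈ range N, a n * (starRingEnd ℂ) (a n))
        + ∑ h ∈ Ico 1 N, ∑ m ∈ range (N - h),
            (a (m + h) * (starRingEnd ℂ) (a m) + a m * (starRingEnd ℂ) (a (m + h))) := by
    rw [map_sum, Finset.sum_mul_sum, vdc_split N (fun n m => a n * (starRingEnd ℂ) (a m)),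
      vdc_reindex N (fun n m => a n * (starRingEnd ℂ) (a m) + a m * (starRingEnd ℂ) (a n))]
  have h2 : ‖∑ n ∈ range N, a n‖ ^ 2
      = ‖(∑ n ∈ range N, a n) * (starRingEnd ℂ) (∑ n ∈ range N, a n)‖ := by
    rw [norm_mul, Complex.norm_conj, sq]
  have hdiag : ‖∑ n ∈ range N, a n * (starRingEnd ℂ) (a n)‖
      = ∑ n ∈ range N, ‖u n‖ ^ 2 := by
    have e : ∀ n ∈ range N, a n * (starRingEnd ℂ) (a n)
        = ((‖u n‖ ^ 2 : ℝ) : ℂ) := by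
      intro n _
      have e0 : Complex.normSq (a n) = ‖u n‖ ^ 2 := by
        rw [← Complex.sq_norm, habs]
      rw [Complex.mul_conj, e0]
    rw [Finset.sum_congr rfl e]
    rw [← Complex.ofReal_sum]
    rw [Complex.norm_real, Real.norm_eq_abs]
    exact abs_of_nonneg (Finset.sum_nonneg fun i _ => sq_nonneg _)
  have hoff : ∀ h : ℕ, ‖∑ m ∈ range (N - h),
        (a (m + h) * (starRingEnd ℂ) (a m) + a m * (starRingEnd ℂ) (a (m + h)))‖
      ≤ 2 * ‖∑ n ∈ range (N - h), (starRingEnd ℂ) (u (n + h)) * u n‖ := by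
    intro h
    set z : ℕ → ℂ := fun m => a (m + h) * (starRingEnd ℂ) (a m) with hz
    have e1 : ∀ m ∈ range (N - h), a m * (starRingEnd ℂ) (a (m + h))
        = (starRingEnd ℂ) (z m) := by
      intro m _
      simp only [hz, map_mul, Complex.conj_conj]
      ring
    have e2 : ∑ m ∈ range (N - h), z m
        = (∑ m ∈ range (N - h), u (m + h) * (starRingEnd ℂ) (u m))
            * Complex.exp (2 * (Real.pi:ℂ) * Complex.I * (h:ℂ) * (t:ℂ)) := by
      rw [Finset.sum_mul]
      exact Finset.sum_congr rfl fun m _ => hmul h m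
    have e3 : ‖∑ m ∈ range (N - h), z m‖
        = ‖∑ n ∈ range (N - h), (starRingEnd ℂ) (u (n + h)) * u n‖ := by
      rw [e2, norm_mul, Complex.norm_exp]
      have : (2 * (Real.pi:ℂ) * Complex.I * (h:ℂ) * (t:ℂ)).re = 0 := by
        simp [Complex.mul_re, Complex.mul_im]
      rw [this, Real.exp_zero, mul_one, ← Complex.norm_conj, map_sum]
      congr 1
      exact Finset.sum_congr rfl fun m _ => by simp [map_mul, Complex.conj_conj, mul_comm]
    calc ‖∑ m ∈ range (N - h),
            (a (m + h) * (starRingEnd ℂ) (a m) + a m * (starRingEnd ℂ) (a (m + h)))‖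
        = ‖(∑ m ∈ range (N - h), z m)
            + (starRingEnd ℂ) (∑ m ∈ range (N - h), z m)‖ := by
          rw [Finset.sum_add_distrib, Finset.sum_congr rfl e1, map_sum]
      _ ≤ ‖∑ m ∈ range (N - h), z m‖
            + ‖(starRingEnd ℂ) (∑ m ∈ range (N - h), z m)‖ :=
          norm_add_le _ _
      _ = 2 * ‖∑ n ∈ range (N - h), (starRingEnd ℂ) (u (n + h)) * u n‖ := by
          rw [Complex.norm_conj, e3]; ring
  have hIcc : Finset.Ico 1 N = Finset.Icc 1 (N - 1) := by
    cases N with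
    | zero => simp
    | succ k => rw [Finset.Ico_add_one_right_eq_Icc]; rfl
  have key : ‖∑ n ∈ range N, a n‖ ^ 2
      ≤ (∑ n ∈ range N, ‖u n‖ ^ 2)
        + 2 * ∑ h ∈ Icc 1 (N - 1),
            ‖∑ n ∈ range (N - h), (starRingEnd ℂ) (u (n + h)) * u n‖ := by
    rw [h2, h1]
    refine le_trans (norm_add_le _ _) ?_
    rw [hdiag]
    gcongr
    refine le_trans (norm_sum_le _ _) ?_
    rw [← hIcc, Finset.mul_sum]
    exact Finset.sum_le_sum fun h _ => hoff h
  have hA : 0 ≤ ∑ n ∈ range N, ‖u n‖ ^ 2 :=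
    Finset.sum_nonneg fun i _ => sq_nonneg _
  have hB : 0 ≤ ∑ h ∈ Icc 1 (N - 1),
      ‖∑ n ∈ range (N - h), (starRingEnd ℂ) (u (n + h)) * u n‖ :=
    Finset.sum_nonneg fun i _ => norm_nonneg _
  linarith
/-- Summation (unnormalized) variant of the Van der Corput estimate. -/
theorem vdc_summation (N : ℕ) (u : ℕ → ℂ) :
    (⨆ t : ℝ, ‖∑ n ∈ range N,
        u n * Complex.exp (2 * (Real.pi : ℂ) * Complex.I * (n : ℂ) * (t : ℂ))‖ ^ 2) ≤
      2 * ∑ n ∈ range N, ‖u n‖ ^ 2 +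
        4 * ∑ h ∈ Icc 1 (N - 1),
          ‖∑ n ∈ range (N - h), (starRingEnd ℂ) (u (n + h)) * u n‖ := by
  exact ciSup_le fun t => vdc_pointwise N u t
end

section
/- Let $(X,\mathcal{F},\mu,T)$ be an invertible measure-preserving probability system and let $f_1, f_2 \in L^\infty(\mu)$ with $\Vert f_1\Vert_\infty \le 1$, $\Vert f_2\Vert_\infty \le 1$. Let $a_1, a_2$ be distinct nonzero integers, $N \in \mathbb{N}$, and $1 \le N_1 \le N$ an integer. Then for every $x \in X$, $\sum_{k=1}^{N_1}\left|\frac{1}{N}\sum_{n=1}^N f_1(T^{a_1 n}x)\,f_2(T^{a_2 n + (a_2-a_1)k}x)\right|^2 \le 2N\,(2|a_2|+|a_1|+1)\left(\sup_{t\in\mathbb{R}}\left|\frac{1}{N}\sum_{n=1}^N e^{2\pi i n t} f_1(T^{a_1 n}x)\right|\right)^2$. -/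
open Finset MeasureTheory

/-- Iteration of an invertible map indexed by integers. -/
noncomputable def zpowIter {X : Type*} (T Tinv : X → X) (m : ℤ) : X → X :=
  if 0 ≤ m then T^[m.toNat] else Tinv^[(-m).toNat]

open Complex

noncomputable def eL (L : ℕ) (s : ℤ) : ℂ := Complex.exp (2 * Real.pi * Complex.I * s / L)

lemma eL_add (L : ℕ) (s t : ℤ) : eL L (s + t) = eL L s * eL L t := by
  rw [eL, eL, eL, ← Complex.exp_add]
  congr 1
  push_cast
  ring

lemma eL_conj (L : ℕ) (s : ℤ) : (starRingEnd ℂ) (eL L s) = eL L (-s) := by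
  rw [eL, eL, ← Complex.exp_conj]
  congr 1
  push_cast
  simp only [map_mul, map_div₀, Complex.conj_I, map_ofNat, Complex.conj_ofReal,
    map_intCast, map_natCast]
  ring

lemma eL_abs (L : ℕ) (s : ℤ) : ‖eL L s‖ = 1 := by
  rw [eL, Complex.norm_exp]
  have : (2 * Real.pi * Complex.I * s / L) = ((2 * Real.pi * s / L : ℝ) : ℂ) * Complex.I := by
    push_cast; ring
  rw [this]
  simp

lemma eL_pow (L : ℕ) (r : ℤ) (j : ℕ) : eL L (r * j) = (eL L r) ^ j := by
  induction j with
  | zero => simp [eL]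
  | succ n ih =>
      rw [pow_succ, ← ih, ← eL_add]
      congr 1
      push_cast
      ring

lemma eL_sum (L : ℕ) (hL : 0 < L) (r : ℤ) (hr : |r| < L) :
    ∑ j ∈ Finset.range L, eL L (r * j) = if r = 0 then (L : ℂ) else 0 := by
  by_cases h : r = 0
  · simp [h, eL]
  · rw [if_neg h]
    simp only [eL_pow]
    have hLne : (L : ℂ) ≠ 0 := by exact_mod_cast hL.ne'
    have hζ1 : eL L r ≠ 1 := by
      intro hc
      rw [eL, Complex.exp_eq_one_iff] at hc
      obtain ⟨n, hn⟩ := hc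
      have h2 : (2 * (Real.pi : ℂ) * Complex.I) ≠ 0 := by
        simp [Real.pi_ne_zero, Complex.I_ne_zero]
      have hrc : (r : ℂ) = n * L := by
        field_simp at hn
        -- hn should be: 2 * π * I * r = n * (2 * π * I) * L (some form)
        apply mul_left_cancel₀ h2
        linear_combination (2 * (Real.pi : ℂ) * Complex.I) * hn
      have hrz : r = n * L := by exact_mod_cast hrc
      rcases eq_or_ne n 0 with h0 | h0
      · exact h (by simp [hrz, h0])
      · have : (L : ℤ) ≤ |r| := by
          rw [hrz, abs_mul, abs_of_nonneg (show (0:ℤ) ≤ (L:ℤ) by positivity)]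
          nlinarith [Int.one_le_abs h0]
        omega
    have hζL : (eL L r) ^ L = 1 := by
      rw [← eL_pow, eL]
      have : (2 * (Real.pi:ℂ) * Complex.I * ((r * L : ℤ):ℂ) / L) = r * (2 * Real.pi * Complex.I) := by
        push_cast; field_simp
      rw [this, Complex.exp_int_mul_two_pi_mul_I]
    rw [geom_sum_eq hζ1 L, hζL]
    simp

lemma parseval_aux (L : ℕ) (hL : 0 < L) (s : Finset ℤ)
    (hs : ∀ m ∈ s, ∀ m' ∈ s, |m - m'| < L) (F : ℤ → ℂ) :
    ∑ j ∈ Finset.range L, ‖∑ m ∈ s, eL L (-(m * j)) * F m‖ ^ 2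
      = L * ∑ m ∈ s, ‖F m‖ ^ 2 := by
  set Q : ℕ → ℂ := fun j => ∑ m ∈ s, eL L (-(m * j)) * F m with hQ
  have key : ∑ j ∈ Finset.range L, Q j * (starRingEnd ℂ) (Q j)
      = ∑ m ∈ s, F m * (starRingEnd ℂ) (F m) * L := by
    have hconj : ∀ j : ℕ, (starRingEnd ℂ) (Q j) = ∑ m' ∈ s, eL L (m' * j) * (starRingEnd ℂ) (F m') := by
      intro j
      rw [hQ]
      simp only [map_sum, map_mul, eL_conj, neg_neg]
    calc ∑ j ∈ Finset.range L, Q j * (starRingEnd ℂ) (Q j)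
        = ∑ j ∈ Finset.range L, ∑ m ∈ s, ∑ m' ∈ s,
            F m * (starRingEnd ℂ) (F m') * eL L ((m' - m) * j) := by
          refine Finset.sum_congr rfl fun j _ => ?_
          rw [hconj j, hQ, Finset.sum_mul_sum]
          refine Finset.sum_congr rfl fun m _ => Finset.sum_congr rfl fun m' _ => ?_
          have : ((m' : ℤ) - m) * j = -(m * j) + m' * j := by ring
          rw [this, eL_add]; ring
      _ = ∑ m ∈ s, ∑ m' ∈ s, F m * (starRingEnd ℂ) (F m') * ∑ j ∈ Finset.range L, eL L ((m' - m) * j) := by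
          rw [Finset.sum_comm]
          refine Finset.sum_congr rfl fun m _ => ?_
          rw [Finset.sum_comm]
          refine Finset.sum_congr rfl fun m' _ => ?_
          rw [Finset.mul_sum]
      _ = ∑ m ∈ s, F m * (starRingEnd ℂ) (F m) * L := by
          refine Finset.sum_congr rfl fun m hm => ?_
          rw [Finset.sum_eq_single m]
          · rw [eL_sum L hL _ (by simpa using hs m hm m hm), if_pos (by ring)]
          · intro m' hm' hne
            rw [eL_sum L hL _ (hs m' hm' m hm), if_neg (by omega)]
            ring
          · intro h; exact absurd hm h
  have cast1 : ((∑ j ∈ Finset.range L, ‖Q j‖ ^ 2 : ℝ) : ℂ)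
      = ∑ j ∈ Finset.range L, Q j * (starRingEnd ℂ) (Q j) := by
    push_cast
    refine Finset.sum_congr rfl fun j _ => ?_
    rw [Complex.mul_conj, Complex.normSq_eq_norm_sq]
    norm_cast
  have cast2 : (((L : ℝ) * ∑ m ∈ s, ‖F m‖ ^ 2 : ℝ) : ℂ)
      = ∑ m ∈ s, F m * (starRingEnd ℂ) (F m) * L := by
    push_cast
    rw [Finset.mul_sum]
    refine Finset.sum_congr rfl fun m _ => ?_
    rw [Complex.mul_conj, Complex.normSq_eq_norm_sq]
    push_cast; ring
  have : ((∑ j ∈ Finset.range L, ‖Q j‖ ^ 2 : ℝ) : ℂ)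
      = (((L : ℝ) * ∑ m ∈ s, ‖F m‖ ^ 2 : ℝ) : ℂ) := by
    rw [cast1, cast2, key]
  exact_mod_cast this

lemma fourier_invert (L : ℕ) (hL : 0 < L) (A : Finset ℕ) (c : ℕ → ℂ) (s : Finset ℤ) (F : ℤ → ℂ)
    (φ : ℕ → ℤ) (hφ : ∀ n ∈ A, φ n ∈ s) (hbound : ∀ n ∈ A, ∀ m ∈ s, |φ n - m| < L) :
    (L : ℂ)⁻¹ * ∑ j ∈ Finset.range L,
        (∑ n ∈ A, eL L (φ n * j) * c n) * (∑ m ∈ s, eL L (-(m * j)) * F m)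
      = ∑ n ∈ A, c n * F (φ n) := by
  have hLne : (L : ℂ) ≠ 0 := by exact_mod_cast hL.ne'
  have key : ∑ j ∈ Finset.range L,
      (∑ n ∈ A, eL L (φ n * j) * c n) * (∑ m ∈ s, eL L (-(m * j)) * F m)
      = ∑ n ∈ A, c n * F (φ n) * L := by
    calc ∑ j ∈ Finset.range L, (∑ n ∈ A, eL L (φ n * j) * c n) * (∑ m ∈ s, eL L (-(m * j)) * F m)
        = ∑ j ∈ Finset.range L, ∑ n ∈ A, ∑ m ∈ s, c n * F m * eL L ((φ n - m) * j) := by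
          refine Finset.sum_congr rfl fun j _ => ?_
          rw [Finset.sum_mul_sum]
          refine Finset.sum_congr rfl fun n _ => Finset.sum_congr rfl fun m _ => ?_
          have : (φ n - m) * j = φ n * j + -(m * j) := by ring
          rw [this, eL_add]; ring
      _ = ∑ n ∈ A, ∑ m ∈ s, c n * F m * ∑ j ∈ Finset.range L, eL L ((φ n - m) * j) := by
          rw [Finset.sum_comm]
          refine Finset.sum_congr rfl fun n _ => ?_
          rw [Finset.sum_comm]
          refine Finset.sum_congr rfl fun m _ => ?_
          rw [Finset.mul_sum]
      _ = ∑ n ∈ A, c n * F (φ n) * L := by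
          refine Finset.sum_congr rfl fun n hn => ?_
          rw [Finset.sum_eq_single (φ n)]
          · rw [eL_sum L hL _ (by simpa using hbound n hn (φ n) (hφ n hn)), if_pos (by ring)]
          · intro m hm hne
            rw [eL_sum L hL _ (hbound n hn m hm), if_neg (by omega)]
            ring
          · intro h; exact absurd (hφ n hn) h
  rw [key, ← Finset.sum_mul]
  field_simp

set_option maxHeartbeats 2000000 in
/-- The Bessel-inequality step in Bourgain's double recurrence bound: the shifted double
recurrence averages at a point `x` are square-summable, with bound given by the
Wiener–Wintner maximal average of `f₁` along the `a₁`-orbit of `x`. -/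
theorem bessel_double_recurrence (X : Type*) [MeasurableSpace X] (μ : Measure X)
    [IsProbabilityMeasure μ] (T Tinv : X → X) (hT : MeasurePreserving T μ μ)
    (hTl : Function.LeftInverse Tinv T) (hTr : Function.RightInverse Tinv T)
    (f₁ f₂ : X → ℂ) (hb1 : ∀ x, ‖f₁ x‖ ≤ 1) (hb2 : ∀ x, ‖f₂ x‖ ≤ 1)
    (a₁ a₂ : ℤ) (h12 : a₁ ≠ a₂) (h1 : a₁ ≠ 0) (h2 : a₂ ≠ 0)
    (N N₁ : ℕ) (hN₁ : 1 ≤ N₁) (hN : N₁ ≤ N) (x : X) :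
    ∑ k ∈ Icc 1 N₁, ‖((N : ℂ)⁻¹ * ∑ n ∈ Icc 1 N,
        f₁ (zpowIter T Tinv (a₁ * n) x) *
          f₂ (zpowIter T Tinv (a₂ * n + (a₂ - a₁) * k) x))‖ ^ 2 ≤
      2 * (N : ℝ) * (2 * |(a₂ : ℝ)| + |(a₁ : ℝ)| + 1) *
        (⨆ t : ℝ, ‖((N : ℂ)⁻¹ * ∑ n ∈ Icc 1 N,
          Complex.exp (2 * (Real.pi : ℂ) * Complex.I * (n : ℂ) * (t : ℂ)) *
            f₁ (zpowIter T Tinv (a₁ * n) x))‖) ^ 2 := by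

  classical
  have hN0 : 0 < N := le_trans hN₁ hN
  have hNne : (N : ℂ) ≠ 0 := by exact_mod_cast hN0.ne'
  set c : ℕ → ℂ := fun n => f₁ (zpowIter T Tinv (a₁ * n) x) with hcdef
  set F : ℤ → ℂ := fun m => f₂ (zpowIter T Tinv m x) with hFdef
  have hc : ∀ n : ℕ, f₁ (zpowIter T Tinv (a₁ * n) x) = c n := fun _ => rfl
  have hF : ∀ m : ℤ, f₂ (zpowIter T Tinv m x) = F m := fun _ => rfl
  have hc1 : ∀ n : ℕ, ‖c n‖ ≤ 1 := fun n => hb1 _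
  have hF1 : ∀ m : ℤ, ‖F m‖ ≤ 1 := fun m => hb2 _
  simp only [hc, hF]
  set S : ℕ := 2 * a₂.natAbs + a₁.natAbs with hSdef
  set M : ℕ := N * S with hMdef
  set L : ℕ := 2 * M + 1 with hLdef
  have hLpos : 0 < L := Nat.succ_pos _
  have hLne : (L : ℂ) ≠ 0 := by exact_mod_cast hLpos.ne'
  have hLneR : (L : ℝ) ≠ 0 := by exact_mod_cast hLpos.ne'
  set C : ℝ := ⨆ t : ℝ, ‖(N : ℂ)⁻¹ * ∑ n ∈ Icc 1 N,
      Complex.exp (2 * (Real.pi : ℂ) * Complex.I * (n : ℂ) * (t : ℂ)) * c n‖ with hCdef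
  -- boundedness of the averages
  have hbdd : ∀ t : ℝ, ‖(N : ℂ)⁻¹ * ∑ n ∈ Icc 1 N,
      Complex.exp (2 * (Real.pi : ℂ) * Complex.I * (n : ℂ) * (t : ℂ)) * c n‖ ≤ 1 := by
    intro t
    rw [norm_mul]
    have h1 : ‖(N : ℂ)⁻¹‖ = (N : ℝ)⁻¹ := by
      rw [norm_inv, Complex.norm_natCast]
    rw [h1]
    have habs : ‖∑ n ∈ Icc 1 N,
        Complex.exp (2 * (Real.pi : ℂ) * Complex.I * (n : ℂ) * (t : ℂ)) * c n‖ ≤ N := by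
      refine le_trans (norm_sum_le _ _) ?_
      have hterm : ∀ n ∈ Icc 1 N, ‖Complex.exp (2 * (Real.pi : ℂ) * Complex.I * (n : ℂ) * (t : ℂ)) * c n‖ ≤ 1 := by
        intro n _
        rw [norm_mul]
        have he : ‖Complex.exp (2 * (Real.pi : ℂ) * Complex.I * (n : ℂ) * (t : ℂ))‖ = 1 := by
          have harg : (2 * (Real.pi : ℂ) * Complex.I * (n : ℂ) * (t : ℂ))
              = ((2 * Real.pi * n * t : ℝ) : ℂ) * Complex.I := by push_cast; ring
          rw [harg, Complex.norm_exp_ofReal_mul_I]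
        rw [he, one_mul]
        exact hc1 n
      refine le_trans (Finset.sum_le_sum hterm) ?_
      simp [Nat.card_Icc]
    refine le_trans (mul_le_mul_of_nonneg_left habs (by positivity)) ?_
    rw [inv_mul_cancel₀ (by exact_mod_cast hN0.ne' : (N : ℝ) ≠ 0)]
  have hBdd : BddAbove (Set.range fun t : ℝ => ‖(N : ℂ)⁻¹ * ∑ n ∈ Icc 1 N,
      Complex.exp (2 * (Real.pi : ℂ) * Complex.I * (n : ℂ) * (t : ℂ)) * c n‖) := by
    refine ⟨1, ?_⟩
    rintro y ⟨t, rfl⟩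
    exact hbdd t
  have hCle : ∀ t : ℝ, ‖(N : ℂ)⁻¹ * ∑ n ∈ Icc 1 N,
      Complex.exp (2 * (Real.pi : ℂ) * Complex.I * (n : ℂ) * (t : ℂ)) * c n‖ ≤ C :=
    fun t => le_ciSup hBdd t
  have hC0 : 0 ≤ C := le_trans (norm_nonneg _) (hCle 0)
  -- the trig polynomials
  set P : ℕ → ℂ := fun j => ∑ n ∈ Icc 1 N, eL L (a₂ * n * j) * c n with hPdef
  set Q : ℕ → ℂ := fun j => ∑ m ∈ Icc (-(M : ℤ)) (M : ℤ), eL L (-(m * j)) * F m with hQdef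
  have hP : ∀ j : ℕ, ‖P j‖ ≤ N * C := by
    intro j
    have ht : ∀ n : ℕ, n ∈ Icc 1 N → eL L (a₂ * n * j)
        = Complex.exp (2 * (Real.pi : ℂ) * Complex.I * (n : ℂ) * ((((a₂ * j : ℤ) : ℝ) / (L : ℝ) : ℝ) : ℂ)) := by
      intro n _
      rw [eL]
      congr 1
      push_cast
      ring
    have hPj : P j = (N : ℂ) * ((N : ℂ)⁻¹ * ∑ n ∈ Icc 1 N,
        Complex.exp (2 * (Real.pi : ℂ) * Complex.I * (n : ℂ) * ((((a₂ * j : ℤ) : ℝ) / (L : ℝ) : ℝ) : ℂ)) * c n) := by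
      rw [← mul_assoc, mul_inv_cancel₀ hNne, one_mul]
      exact Finset.sum_congr rfl fun n hn => by rw [ht n hn]
    rw [hPj, norm_mul, Complex.norm_natCast]
    exact mul_le_mul_of_nonneg_left (hCle _) (Nat.cast_nonneg N)
  -- Parseval bound for Q
  have hQpar : ∑ j ∈ Finset.range L, ‖Q j‖ ^ 2 ≤ (L : ℝ) * (2 * M + 1) := by
    have hpar := parseval_aux L hLpos (Icc (-(M : ℤ)) (M : ℤ))
      (fun m hm m' hm' => by
        rw [mem_Icc] at hm hm'
        rw [abs_lt]
        push_cast
        omega) F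
    have hcard : (Icc (-(M : ℤ)) (M : ℤ)).card = 2 * M + 1 := by
      rw [Int.card_Icc]
      omega
    have hFb : ∑ m ∈ Icc (-(M : ℤ)) (M : ℤ), ‖F m‖ ^ 2 ≤ 2 * M + 1 := by
      have hterm : ∑ m ∈ Icc (-(M : ℤ)) (M : ℤ), ‖F m‖ ^ 2
          ≤ ∑ m ∈ Icc (-(M : ℤ)) (M : ℤ), (1 : ℝ) :=
        Finset.sum_le_sum fun m _ => by nlinarith [hF1 m, norm_nonneg (F m)]
      rw [Finset.sum_const, hcard] at hterm
      simpa using hterm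
    simp only [hQdef]
    rw [hpar]
    have hLnn : (0 : ℝ) ≤ L := Nat.cast_nonneg L
    nlinarith [hFb, hLnn]
  -- key membership bound
  have hmemb : ∀ k ∈ Icc 1 N₁, ∀ n ∈ Icc 1 N, |a₂ * (n : ℤ) + (a₂ - a₁) * (k : ℤ)| ≤ (M : ℤ) := by
    intro k hk n hn
    rw [mem_Icc] at hk hn
    have hkN : (k : ℤ) ≤ N := by exact_mod_cast le_trans hk.2 hN
    have hnN : (n : ℤ) ≤ N := by exact_mod_cast hn.2
    have h1' : |a₂ * (n : ℤ)| ≤ |a₂| * (N : ℤ) := by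
      rw [abs_mul, abs_of_nonneg (by positivity : (0 : ℤ) ≤ (n : ℤ))]
      exact mul_le_mul_of_nonneg_left hnN (abs_nonneg _)
    have h2' : |(a₂ - a₁) * (k : ℤ)| ≤ (|a₂| + |a₁|) * (N : ℤ) := by
      rw [abs_mul, abs_of_nonneg (by positivity : (0 : ℤ) ≤ (k : ℤ))]
      exact mul_le_mul (abs_sub _ _) hkN (by positivity) (by positivity)
    have hM' : (M : ℤ) = (N : ℤ) * (2 * |a₂| + |a₁|) := by
      rw [hMdef, hSdef]
      push_cast
      ring
    rw [hM']
    have habs3 := abs_add_le (a₂ * (n : ℤ)) ((a₂ - a₁) * (k : ℤ))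
    linarith [h1', h2', habs3]
  -- the Fourier coefficient identity
  have hId : ∀ k ∈ Icc 1 N₁,
      (L : ℂ)⁻¹ * ∑ j ∈ Finset.range L, eL L ((a₂ - a₁) * k * j) * (P j * Q j)
        = ∑ n ∈ Icc 1 N, c n * F (a₂ * n + (a₂ - a₁) * k) := by
    intro k hk
    have hstep : ∀ j : ℕ, eL L ((a₂ - a₁) * k * j) * (P j * Q j)
        = (∑ n ∈ Icc 1 N, eL L ((a₂ * n + (a₂ - a₁) * k) * j) * c n) * Q j := by
      intro j
      rw [← mul_assoc]
      congr 1
      simp only [hPdef]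
      rw [Finset.mul_sum]
      refine Finset.sum_congr rfl fun n _ => ?_
      have : ((a₂ * n + (a₂ - a₁) * k) : ℤ) * j = (a₂ - a₁) * k * j + a₂ * n * j := by ring
      rw [this, eL_add]
      ring
    simp only [hstep]
    simp only [hQdef]
    exact fourier_invert L hLpos (Icc 1 N) c (Icc (-(M : ℤ)) (M : ℤ)) F
      (fun n => a₂ * n + (a₂ - a₁) * k)
      (fun n hn => by
        rw [mem_Icc]
        exact abs_le.mp (hmemb k hk n hn))
      (fun n hn m hm => by
        rw [mem_Icc] at hm
        have hφb := abs_le.mp (hmemb k hk n hn)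
        rw [abs_lt]
        push_cast
        omega)
  -- Bessel setup
  have hsqlR : ((Real.sqrt L)⁻¹ * (Real.sqrt L)⁻¹ : ℝ) = (L : ℝ)⁻¹ := by
    rw [← mul_inv, Real.mul_self_sqrt (Nat.cast_nonneg L)]
  have hsql : (((Real.sqrt L)⁻¹ : ℝ) : ℂ) * (((Real.sqrt L)⁻¹ : ℝ) : ℂ) = (L : ℂ)⁻¹ := by
    rw [← Complex.ofReal_mul, hsqlR, Complex.ofReal_inv, Complex.ofReal_natCast]
  set d : Fin N₁ → ℤ := fun i => (a₂ - a₁) * ((1 + (i : ℕ) : ℕ) : ℤ) with hddef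
  have hdk : ∀ i : Fin N₁, (1 + (i : ℕ)) ∈ Icc 1 N₁ := fun i => by
    rw [mem_Icc]
    have := i.2
    omega
  have hM' : (M : ℤ) = (N : ℤ) * (2 * |a₂| + |a₁|) := by
    rw [hMdef, hSdef]
    push_cast
    ring
  have hdlt : ∀ i i' : Fin N₁, |d i - d i'| < (L : ℤ) := by
    intro i i'
    have hdd : d i - d i' = (a₂ - a₁) * ((i : ℤ) - (i' : ℤ)) := by
      simp only [hddef]
      push_cast
      ring
    rw [hdd, abs_mul]
    have h1' : |a₂ - a₁| ≤ 2 * |a₂| + |a₁| := by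
      have := abs_sub a₂ a₁
      have := abs_nonneg a₂
      linarith
    have h2' : |(i : ℤ) - (i' : ℤ)| ≤ (N : ℤ) := by
      have hi := i.2
      have hi' := i'.2
      rw [abs_le]
      constructor <;> [skip; skip] <;> push_cast <;> omega
    have h3' := mul_le_mul h1' h2' (abs_nonneg _) (by positivity)
    have hL' : (L : ℤ) = 2 * (M : ℤ) + 1 := by rw [hLdef]; push_cast; ring
    rw [hL', hM']
    have h4' : (0 : ℤ) ≤ (2 * |a₂| + |a₁|) * (N : ℤ) := by positivity
    linarith [h3', h4']
  have hdinj : ∀ i i' : Fin N₁, (d i - d i' = 0) ↔ i = i' := by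
    intro i i'
    constructor
    · intro h
      have hdd : (a₂ - a₁) * ((i : ℤ) - (i' : ℤ)) = 0 := by
        have : d i - d i' = (a₂ - a₁) * ((i : ℤ) - (i' : ℤ)) := by
          simp only [hddef]; push_cast; ring
        rw [← this, h]
      rcases mul_eq_zero.mp hdd with h' | h'
      · exact absurd (sub_eq_zero.mp h').symm h12
      · have : (i : ℤ) = (i' : ℤ) := by omega
        exact Fin.ext (by exact_mod_cast this)
    · rintro rfl; ring
  set v : Fin N₁ → EuclideanSpace ℂ (Fin L) :=
    fun i => WithLp.toLp 2 (fun j => (((Real.sqrt L)⁻¹ : ℝ) : ℂ) * eL L (-(d i * (j : ℕ)))) with hvdef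
  set w : EuclideanSpace ℂ (Fin L) :=
    WithLp.toLp 2 (fun j => (((Real.sqrt L)⁻¹ : ℝ) : ℂ) * (P (j : ℕ) * Q (j : ℕ))) with hwdef
  have hortho : Orthonormal ℂ v := by
    rw [orthonormal_iff_ite]
    intro i i'
    rw [PiLp.inner_apply]
    have hterm : ∀ j : Fin L, inner ℂ (v i j) (v i' j)
        = (L : ℂ)⁻¹ * eL L ((d i - d i') * (j : ℕ)) := by
      intro j
      simp only [hvdef, PiLp.toLp_apply, RCLike.inner_apply, map_mul, Complex.conj_ofReal, eL_conj, neg_neg]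
      rw [← hsql]
      have harg : (d i - d i') * ((j : ℕ) : ℤ)
          = d i * ((j : ℕ) : ℤ) + -(d i' * ((j : ℕ) : ℤ)) := by ring
      rw [harg, eL_add]
      ring
    simp only [hterm]
    rw [← Finset.mul_sum]
    rw [Fin.sum_univ_eq_sum_range (fun j => eL L ((d i - d i') * (j : ℕ))) L]
    rw [eL_sum L hLpos _ (hdlt i i')]
    by_cases h : i = i'
    · subst h
      rw [if_pos (by ring), if_pos rfl, inv_mul_cancel₀ hLne]
    · rw [if_neg (fun hc => h ((hdinj i i').mp hc)), if_neg h, mul_zero]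
  have hinner : ∀ i : Fin N₁, inner ℂ (v i) w
      = ∑ n ∈ Icc 1 N, c n * F (a₂ * n + (a₂ - a₁) * ((1 + (i : ℕ) : ℕ) : ℤ)) := by
    intro i
    rw [PiLp.inner_apply]
    have hterm : ∀ j : Fin L, inner ℂ (v i j) (w j)
        = (L : ℂ)⁻¹ * (eL L (d i * (j : ℕ)) * (P (j : ℕ) * Q (j : ℕ))) := by
      intro j
      simp only [hvdef, hwdef, PiLp.toLp_apply, RCLike.inner_apply, map_mul, Complex.conj_ofReal, eL_conj, neg_neg]
      rw [← hsql]
      ring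
    simp only [hterm]
    rw [← Finset.mul_sum]
    rw [Fin.sum_univ_eq_sum_range (fun j => eL L (d i * (j : ℕ)) * (P j * Q j)) L]
    exact hId (1 + (i : ℕ)) (hdk i)
  have hwnorm : ‖w‖ ^ 2 ≤ ((N : ℝ) * C) ^ 2 * (2 * M + 1) := by
    rw [EuclideanSpace.norm_eq, Real.sq_sqrt (by positivity)]
    have hterm : ∀ j : Fin L, ‖w j‖ ^ 2
        = (L : ℝ)⁻¹ * (‖P (j : ℕ)‖ ^ 2 * ‖Q (j : ℕ)‖ ^ 2) := by
      intro j
      simp only [hwdef, PiLp.toLp_apply, norm_mul, Complex.norm_real, Real.norm_eq_abs]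
      rw [_root_.abs_of_nonneg (by positivity : (0 : ℝ) ≤ (Real.sqrt L)⁻¹)]
      rw [mul_pow, mul_pow, pow_two, hsqlR]
    simp only [hterm]
    rw [← Finset.mul_sum]
    rw [Fin.sum_univ_eq_sum_range (fun j => ‖P j‖ ^ 2 * ‖Q j‖ ^ 2) L]
    have hb' : ∑ j ∈ Finset.range L, ‖P j‖ ^ 2 * ‖Q j‖ ^ 2
        ≤ ((N : ℝ) * C) ^ 2 * ∑ j ∈ Finset.range L, ‖Q j‖ ^ 2 := by
      rw [Finset.mul_sum]
      refine Finset.sum_le_sum fun j _ => ?_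
      have h1' : ‖P j‖ ^ 2 ≤ ((N : ℝ) * C) ^ 2 := by
        nlinarith [hP j, norm_nonneg (P j)]
      nlinarith [h1', sq_nonneg (‖Q j‖)]
    have h3' : ∑ j ∈ Finset.range L, ‖P j‖ ^ 2 * ‖Q j‖ ^ 2
        ≤ ((N : ℝ) * C) ^ 2 * ((L : ℝ) * (2 * M + 1)) :=
      le_trans hb' (mul_le_mul_of_nonneg_left hQpar (by positivity))
    have h4' := mul_le_mul_of_nonneg_left h3' (by positivity : (0 : ℝ) ≤ (L : ℝ)⁻¹)
    refine le_trans h4' (le_of_eq ?_)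
    field_simp
  have hbessel : ∑ i : Fin N₁, ‖inner ℂ (v i) w‖ ^ 2 ≤ ‖w‖ ^ 2 :=
    hortho.sum_inner_products_le w
  -- final assembly
  have hIcc : Icc 1 N₁ = Ico 1 (N₁ + 1) := by rw [Finset.Ico_add_one_right_eq_Icc]
  rw [hIcc, Finset.sum_Ico_eq_sum_range]
  simp only [Nat.add_sub_cancel]
  rw [← Fin.sum_univ_eq_sum_range (fun i => ‖(N : ℂ)⁻¹ *
      ∑ n ∈ Icc 1 N, c n * F (a₂ * n + (a₂ - a₁) * ((1 + i : ℕ) : ℤ))‖ ^ 2) N₁]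
  have habsT : ∀ i : Fin N₁, ‖(N : ℂ)⁻¹ *
      ∑ n ∈ Icc 1 N, c n * F (a₂ * n + (a₂ - a₁) * ((1 + (i : ℕ) : ℕ) : ℤ))‖ ^ 2
      = ((N : ℝ)⁻¹) ^ 2 * ‖inner ℂ (v i) w‖ ^ 2 := by
    intro i
    rw [hinner i, norm_mul, norm_inv, Complex.norm_natCast]
    ring
  simp only [habsT]
  rw [← Finset.mul_sum]
  have hb2' : ∑ i : Fin N₁, ‖inner ℂ (v i) w‖ ^ 2 ≤ ((N : ℝ) * C) ^ 2 * (2 * M + 1) :=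
    le_trans hbessel hwnorm
  refine le_trans (mul_le_mul_of_nonneg_left hb2' (by positivity)) ?_
  have hNR : (N : ℝ) ≠ 0 := by exact_mod_cast hN0.ne'
  have hfinal : ((N : ℝ)⁻¹) ^ 2 * (((N : ℝ) * C) ^ 2 * (2 * M + 1)) = C ^ 2 * (2 * M + 1) := by
    field_simp
  rw [hfinal]
  have hMr : (M : ℝ) = (N : ℝ) * (2 * |(a₂ : ℝ)| + |(a₁ : ℝ)|) := by
    rw [hMdef, hSdef]
    push_cast [Nat.cast_natAbs]
    ring
  have hstep2 : (2 * (M : ℝ) + 1) ≤ 2 * (N : ℝ) * (2 * |(a₂ : ℝ)| + |(a₁ : ℝ)| + 1) := by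
    rw [hMr]
    have hN1R : (1 : ℝ) ≤ N := by exact_mod_cast hN0
    nlinarith
  nlinarith [hstep2, sq_nonneg C]
end

section
/- Let $(X, \mathcal{F}, \mu, T)$ be a measure-preserving probability system, $g \in L^\infty(\mu)$ with $\Vert g\Vert_\infty \le 1$, and $N \ge 1$ an integer. Then $\left\Vert \sup_{t\in\mathbb{R}}\left|\frac{1}{N}\sum_{n=1}^N e^{2\pi i n t}\, g\circ T^n\right|\right\Vert_2 \;\le\; \left\Vert \sup_{t\in\mathbb{R}}\left|\frac{1}{\lfloor\sqrt{N}\rfloor}\sum_{n=1}^{\lfloor\sqrt{N}\rfloor} e^{2\pi i n t}\, g\circ T^n\right|\right\Vert_2 + \frac{2}{\sqrt{N}}$. -/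
open Finset MeasureTheory

/-- Block decomposition of a sum over `Icc 1 (K*K)`. -/
lemma ww_sum_blocks {M : Type*} [AddCommMonoid M] (K : ℕ) (hK : 0 < K) (f : ℕ → M) :
    ∑ n ∈ Finset.Icc 1 (K * K), f n
      = ∑ j ∈ Finset.range K, ∑ m ∈ Finset.Icc 1 K, f (j * K + m) := by
  rw [← Finset.sum_product']
  refine Finset.sum_nbij' (i := fun n => ((n - 1) / K, (n - 1) % K + 1))
    (j := fun p => p.1 * K + p.2) ?_ ?_ ?_ ?_ ?_
  · intro n hn
    simp only [Finset.mem_Icc] at hn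
    simp only [Finset.mem_product, Finset.mem_range, Finset.mem_Icc]
    refine ⟨?_, by omega, by have := Nat.mod_lt (n - 1) hK; omega⟩
    exact Nat.div_lt_of_lt_mul (by omega)
  · intro p hp
    simp only [Finset.mem_product, Finset.mem_range, Finset.mem_Icc] at hp
    obtain ⟨hj, hm1, hm2⟩ := hp
    simp only [Finset.mem_Icc]
    constructor
    · omega
    · have h1 : (p.1 + 1) * K ≤ K * K := Nat.mul_le_mul_right K hj
      have h2 : (p.1 + 1) * K = p.1 * K + K := by ring
      omega
  · intro n hn
    simp only [Finset.mem_Icc] at hn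
    show (n - 1) / K * K + ((n - 1) % K + 1) = n
    have h := Nat.div_add_mod (n - 1) K
    have h2 : (n - 1) / K * K = K * ((n - 1) / K) := Nat.mul_comm _ _
    omega
  · intro p hp
    simp only [Finset.mem_product, Finset.mem_range, Finset.mem_Icc] at hp
    obtain ⟨hj, hm1, hm2⟩ := hp
    show ((p.1 * K + p.2 - 1) / K, (p.1 * K + p.2 - 1) % K + 1) = p
    have h1 : p.1 * K + p.2 - 1 = (p.2 - 1) + p.1 * K := by omega
    have h2 : p.2 - 1 < K := by omega
    have hd : (p.1 * K + p.2 - 1) / K = p.1 := by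
      rw [h1, Nat.add_mul_div_right _ _ hK, Nat.div_eq_of_lt h2, zero_add]
    have hm : (p.1 * K + p.2 - 1) % K = p.2 - 1 := by
      rw [h1, Nat.add_mul_mod_self_right, Nat.mod_eq_of_lt h2]
    have : (p.1 * K + p.2 - 1) % K + 1 = p.2 := by omega
    rw [Prod.ext_iff]
    exact ⟨hd, this⟩
  · intro n hn
    simp only [Finset.mem_Icc] at hn
    show f n = f ((n - 1) / K * K + ((n - 1) % K + 1))
    have h := Nat.div_add_mod (n - 1) K
    have h2 : (n - 1) / K * K = K * ((n - 1) / K) := Nat.mul_comm _ _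
    congr 1
    omega

/-- A continuous function on `ℝ` with bounded range has the same supremum over `ℚ`. -/
lemma ww_iSup_rat {f : ℝ → ℝ} (hf : Continuous f) (hb : BddAbove (Set.range f)) :
    ⨆ t : ℝ, f t = ⨆ q : ℚ, f (q : ℝ) := by
  obtain ⟨B, hB⟩ := hb
  have hb' : BddAbove (Set.range fun q : ℚ => f (q : ℝ)) := by
    refine ⟨B, ?_⟩
    rintro _ ⟨q, rfl⟩
    exact hB (Set.mem_range_self _)
  refine le_antisymm (ciSup_le fun t => ?_) (ciSup_le fun q => le_ciSup ⟨B, hB⟩ (q : ℝ))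
  have hS : IsClosed {t : ℝ | f t ≤ ⨆ q : ℚ, f (q : ℝ)} := isClosed_le hf continuous_const
  have hsub : Set.range (fun q : ℚ => (q : ℝ)) ⊆ {t : ℝ | f t ≤ ⨆ q : ℚ, f (q : ℝ)} := by
    rintro _ ⟨q, rfl⟩
    exact le_ciSup hb' q
  have hdense : t ∈ closure (Set.range (fun q : ℚ => (q : ℝ))) :=
    (Rat.denseRange_cast (𝕜 := ℝ)) t
  exact hS.closure_subset ((closure_mono hsub) hdense)

/-- The Wiener–Wintner maximal average over `N` terms (in `L²`) is bounded by the one over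
`⌊√N⌋` terms, up to an error `2/√N`. -/
theorem wiener_wintner_sqrt_reduction (X : Type*) [MeasurableSpace X] (μ : Measure X)
    [IsProbabilityMeasure μ] (T : X → X) (hT : MeasurePreserving T μ μ)
    (g : X → ℂ) (hg : Measurable g) (hgb : ∀ x, ‖g x‖ ≤ 1)
    (N : ℕ) (hN : 1 ≤ N) :
    eLpNorm (fun x => ⨆ t : ℝ, ‖((N : ℂ)⁻¹ * ∑ n ∈ Icc 1 N,
        Complex.exp (2 * (Real.pi : ℂ) * Complex.I * (n : ℂ) * (t : ℂ)) * g (T^[n] x))‖) 2 μ ≤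
      eLpNorm (fun x => ⨆ t : ℝ, ‖((Nat.sqrt N : ℂ)⁻¹ * ∑ n ∈ Icc 1 (Nat.sqrt N),
        Complex.exp (2 * (Real.pi : ℂ) * Complex.I * (n : ℂ) * (t : ℂ)) * g (T^[n] x))‖) 2 μ +
      ENNReal.ofReal (2 / Real.sqrt (N : ℝ)) := by
  -- Notation
  set K := Nat.sqrt N with hKdef
  have hK : 0 < K := Nat.sqrt_pos.mpr hN
  have hKK : K * K ≤ N := by simpa [pow_two] using Nat.sqrt_le' N
  have hNlt : N < (K + 1) * (K + 1) := by simpa [pow_two] using Nat.lt_succ_sqrt' N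
  set e : ℕ → ℝ → ℂ :=
    fun n t => Complex.exp (2 * (Real.pi : ℂ) * Complex.I * (n : ℂ) * (t : ℂ)) with he
  set S : ℕ → X → ℝ → ℂ :=
    fun M x t => (M : ℂ)⁻¹ * ∑ n ∈ Icc 1 M, e n t * g (T^[n] x) with hS
  set F : ℕ → X → ℝ := fun M x => ⨆ t : ℝ, ‖(S M x t)‖ with hF
  -- basic facts about `e`
  have habs_e : ∀ n t, ‖(e n t)‖ = 1 := by
    intro n t
    have : (2 * (Real.pi : ℂ) * Complex.I * (n : ℂ) * (t : ℂ))
        = ((2 * Real.pi * n * t : ℝ) : ℂ) * Complex.I := by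
      push_cast
      ring
    rw [he]
    simp only [this, Complex.norm_exp_ofReal_mul_I]
  have he_add : ∀ a b t, e (a + b) t = e a t * e b t := by
    intro a b t
    rw [he]
    simp only
    rw [← Complex.exp_add]
    congr 1
    push_cast
    ring
  -- bound on the abs of `S`
  have habs_S : ∀ M, 0 < M → ∀ x t, ‖(S M x t)‖ ≤ 1 := by
    intro M hM x t
    rw [hS]
    simp only [norm_mul, norm_inv, Complex.norm_natCast]
    have h1 : ‖(∑ n ∈ Icc 1 M, e n t * g (T^[n] x))‖ ≤ (M : ℝ) := by
      refine le_trans (norm_sum_le _ _) ?_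
      have : ∀ n ∈ Icc 1 M, ‖(e n t * g (T^[n] x))‖ ≤ 1 := by
        intro n _
        rw [norm_mul, habs_e]
        simpa using hgb (T^[n] x)
      refine le_trans (Finset.sum_le_sum this) ?_
      simp [Nat.card_Icc]
    calc ((M : ℝ))⁻¹ * ‖(∑ n ∈ Icc 1 M, e n t * g (T^[n] x))‖
        ≤ (M : ℝ)⁻¹ * (M : ℝ) := by
          apply mul_le_mul_of_nonneg_left h1 (by positivity)
      _ = 1 := by
          rw [inv_mul_cancel₀]
          exact_mod_cast hM.ne'
  have hbdd : ∀ M, 0 < M → ∀ x, BddAbove (Set.range fun t => ‖(S M x t)‖) := by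
    intro M hM x
    refine ⟨1, ?_⟩
    rintro _ ⟨t, rfl⟩
    exact habs_S M hM x t
  have hF_nonneg : ∀ M x, 0 ≤ F M x := by
    intro M x
    exact Real.iSup_nonneg fun t => norm_nonneg _
  have hle_F : ∀ M, 0 < M → ∀ x t, ‖(S M x t)‖ ≤ F M x := by
    intro M hM x t
    exact le_ciSup (hbdd M hM x) t
  -- measurability of F K
  have hScont : ∀ M x, Continuous fun t => ‖(S M x t)‖ := by
    intro M x
    have : Continuous fun t => S M x t := by
      simp only [hS, he]
      fun_prop
    exact continuous_norm.comp this
  have hFmeas : ∀ M, 0 < M → Measurable (F M) := by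
    intro M hM
    have : F M = fun x => ⨆ q : ℚ, ‖(S M x (q : ℝ))‖ := by
      funext x
      exact ww_iSup_rat (hScont M x) (hbdd M hM x)
    rw [this]
    refine Measurable.iSup fun q => ?_
    have hSmeas : Measurable fun x => S M x (q : ℝ) := by
      rw [hS]
      simp only
      refine Measurable.const_mul ?_ _
      refine Finset.measurable_sum _ fun n _ => ?_
      exact (hg.comp (hT.measurable.iterate n)).const_mul _
    exact continuous_norm.measurable.comp hSmeas
  -- Pointwise bound: F N x ≤ K⁻¹ ∑_{j<K} F K (T^[j*K] x) + 2/√N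
  have hsqrtN_pos : (0 : ℝ) < Real.sqrt N := Real.sqrt_pos.mpr (by positivity)
  have hNR : (0 : ℝ) < (N : ℝ) := by positivity
  have hKle_sqrt : (K : ℝ) ≤ Real.sqrt N := by
    rw [show (K : ℝ) = Real.sqrt ((K : ℝ) ^ 2) from (Real.sqrt_sq (by positivity)).symm]
    apply Real.sqrt_le_sqrt
    have : ((K * K : ℕ) : ℝ) ≤ (N : ℝ) := by exact_mod_cast hKK
    push_cast at this
    nlinarith
  have hmulself : Real.sqrt N * Real.sqrt N = (N : ℝ) := Real.mul_self_sqrt (by positivity)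
  have hpointwise : ∀ x, F N x ≤
      (K : ℝ)⁻¹ * ∑ j ∈ range K, F K (T^[j * K] x) + 2 / Real.sqrt N := by
    intro x
    refine ciSup_le fun t => ?_
    -- split the sum
    have hsplit : ∑ n ∈ Icc 1 N, e n t * g (T^[n] x)
        = (∑ n ∈ Icc 1 (K * K), e n t * g (T^[n] x))
          + ∑ n ∈ Ioc (K * K) N, e n t * g (T^[n] x) := by
      rw [show (Icc 1 N : Finset ℕ) = Ioc 0 N by ext a; simp; omega]
      rw [show (Icc 1 (K * K) : Finset ℕ) = Ioc 0 (K * K) by ext a; simp; omega]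
      exact (Finset.sum_Ioc_consecutive _ (Nat.zero_le _) hKK).symm
    have habs1 : ‖(S N x t)‖
        ≤ ‖((N : ℂ)⁻¹ * ∑ n ∈ Icc 1 (K * K), e n t * g (T^[n] x))‖
          + ‖((N : ℂ)⁻¹ * ∑ n ∈ Ioc (K * K) N, e n t * g (T^[n] x))‖ := by
      rw [hS]
      simp only [hsplit, mul_add]
      exact norm_add_le _ _
    -- tail bound
    have htail : ‖((N : ℂ)⁻¹ * ∑ n ∈ Ioc (K * K) N, e n t * g (T^[n] x))‖
        ≤ 2 / Real.sqrt N := by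
      rw [norm_mul, norm_inv, Complex.norm_natCast]
      have h1 : ‖(∑ n ∈ Ioc (K * K) N, e n t * g (T^[n] x))‖
          ≤ ((N - K * K : ℕ) : ℝ) := by
        refine le_trans (norm_sum_le _ _) ?_
        have : ∀ n ∈ Ioc (K * K) N, ‖(e n t * g (T^[n] x))‖ ≤ 1 := by
          intro n _
          rw [norm_mul, habs_e]
          simpa using hgb (T^[n] x)
        refine le_trans (Finset.sum_le_sum this) ?_
        simp [Nat.card_Ioc]
      have h2 : ((N - K * K : ℕ) : ℝ) ≤ 2 * (K : ℝ) := by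
        have : N - K * K ≤ 2 * K := by
          have hexp : (K + 1) * (K + 1) = K * K + 2 * K + 1 := by ring
          omega
        exact_mod_cast this
      calc ((N : ℝ))⁻¹ * ‖(∑ n ∈ Ioc (K * K) N, e n t * g (T^[n] x))‖
          ≤ (N : ℝ)⁻¹ * (2 * (K : ℝ)) :=
            mul_le_mul_of_nonneg_left (le_trans h1 h2) (by positivity)
        _ ≤ (N : ℝ)⁻¹ * (2 * Real.sqrt N) := by
            apply mul_le_mul_of_nonneg_left _ (by positivity)
            linarith
        _ = 2 / Real.sqrt N := by
            rw [eq_div_iff hsqrtN_pos.ne']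
            field_simp
            nlinarith [hmulself]
    -- main bound
    have hmain : ‖((N : ℂ)⁻¹ * ∑ n ∈ Icc 1 (K * K), e n t * g (T^[n] x))‖
        ≤ (K : ℝ)⁻¹ * ∑ j ∈ range K, F K (T^[j * K] x) := by
      rw [ww_sum_blocks K hK]
      -- each block
      have hblock : ∀ j, ‖(∑ m ∈ Icc 1 K, e (j * K + m) t * g (T^[j * K + m] x))‖
          ≤ (K : ℝ) * F K (T^[j * K] x) := by
        intro j
        have hrw : ∑ m ∈ Icc 1 K, e (j * K + m) t * g (T^[j * K + m] x)
            = e (j * K) t * ∑ m ∈ Icc 1 K, e m t * g (T^[m] (T^[j * K] x)) := by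
          rw [Finset.mul_sum]
          refine Finset.sum_congr rfl fun m _ => ?_
          rw [he_add, show j * K + m = m + j * K from by ring,
            Function.iterate_add_apply]
          ring
        rw [hrw, norm_mul, habs_e, one_mul]
        have : ‖(∑ m ∈ Icc 1 K, e m t * g (T^[m] (T^[j * K] x)))‖
            = (K : ℝ) * ‖(S K (T^[j * K] x) t)‖ := by
          rw [hS]
          simp only [norm_mul, norm_inv, Complex.norm_natCast]
          rw [← mul_assoc, mul_inv_cancel₀ (by exact_mod_cast hK.ne'), one_mul]
        rw [this]
        exact mul_le_mul_of_nonneg_left (hle_F K hK _ t) (by positivity)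
      rw [norm_mul, norm_inv, Complex.norm_natCast]
      calc ((N : ℝ))⁻¹ * ‖(∑ j ∈ range K, ∑ m ∈ Icc 1 K,
            e (j * K + m) t * g (T^[j * K + m] x))‖
          ≤ (N : ℝ)⁻¹ * ∑ j ∈ range K, ((K : ℝ) * F K (T^[j * K] x)) := by
            apply mul_le_mul_of_nonneg_left _ (by positivity)
            exact le_trans (norm_sum_le _ _) (Finset.sum_le_sum fun j _ => hblock j)
        _ = ((N : ℝ)⁻¹ * (K : ℝ) * (K : ℝ)) * ((K : ℝ)⁻¹ * ∑ j ∈ range K, F K (T^[j * K] x)) := by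
            rw [← Finset.mul_sum]
            field_simp
        _ ≤ 1 * ((K : ℝ)⁻¹ * ∑ j ∈ range K, F K (T^[j * K] x)) := by
            apply mul_le_mul_of_nonneg_right
            · rw [mul_assoc]
              rw [inv_mul_le_iff₀ hNR, mul_one]
              exact_mod_cast hKK
            · have : 0 ≤ ∑ j ∈ range K, F K (T^[j * K] x) :=
                Finset.sum_nonneg fun j _ => hF_nonneg K _
              positivity
        _ = (K : ℝ)⁻¹ * ∑ j ∈ range K, F K (T^[j * K] x) := one_mul _
    calc ‖(S N x t)‖
        ≤ ‖((N : ℂ)⁻¹ * ∑ n ∈ Icc 1 (K * K), e n t * g (T^[n] x))‖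
          + ‖((N : ℂ)⁻¹ * ∑ n ∈ Ioc (K * K) N, e n t * g (T^[n] x))‖ := habs1
      _ ≤ (K : ℝ)⁻¹ * ∑ j ∈ range K, F K (T^[j * K] x) + 2 / Real.sqrt N :=
          add_le_add hmain htail
  -- Now the L² estimate.
  have hgoal1 : eLpNorm (F N) 2 μ ≤
      eLpNorm (fun x => (K : ℝ)⁻¹ * ∑ j ∈ range K, F K (T^[j * K] x) + 2 / Real.sqrt N) 2 μ := by
    refine eLpNorm_mono_real fun x => ?_
    rw [Real.norm_of_nonneg (hF_nonneg N x)]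
    exact hpointwise x
  -- measurability of the averaged function
  have hFKT : ∀ j : ℕ, Measurable fun x => F K (T^[j * K] x) :=
    fun j => (hFmeas K hK).comp (hT.measurable.iterate _)
  have hA_meas : Measurable fun x => (K : ℝ)⁻¹ * ∑ j ∈ range K, F K (T^[j * K] x) := by
    refine Measurable.const_mul ?_ _
    exact Finset.measurable_sum _ fun j _ => hFKT j
  have hgoal2 : eLpNorm (fun x => (K : ℝ)⁻¹ * ∑ j ∈ range K, F K (T^[j * K] x)
        + 2 / Real.sqrt N) 2 μ ≤
      eLpNorm (fun x => (K : ℝ)⁻¹ * ∑ j ∈ range K, F K (T^[j * K] x)) 2 μ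
        + ENNReal.ofReal (2 / Real.sqrt N) := by
    have hconst : eLpNorm (fun _ : X => (2 / Real.sqrt N : ℝ)) 2 μ
        = ENNReal.ofReal (2 / Real.sqrt N) := by
      rw [eLpNorm_const _ (by norm_num) (IsProbabilityMeasure.ne_zero μ)]
      simp only [measure_univ, ENNReal.one_rpow, mul_one, ← ofReal_norm_eq_enorm]
      rw [Real.norm_of_nonneg (by positivity)]
    calc eLpNorm (fun x => (K : ℝ)⁻¹ * ∑ j ∈ range K, F K (T^[j * K] x)
          + 2 / Real.sqrt N) 2 μ
        ≤ eLpNorm (fun x => (K : ℝ)⁻¹ * ∑ j ∈ range K, F K (T^[j * K] x)) 2 μ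
          + eLpNorm (fun _ : X => (2 / Real.sqrt N : ℝ)) 2 μ :=
          eLpNorm_add_le hA_meas.aestronglyMeasurable aestronglyMeasurable_const (by norm_num)
      _ = _ := by rw [hconst]
  have hgoal3 : eLpNorm (fun x => (K : ℝ)⁻¹ * ∑ j ∈ range K, F K (T^[j * K] x)) 2 μ
      ≤ eLpNorm (F K) 2 μ := by
    have heq : (fun x => (K : ℝ)⁻¹ * ∑ j ∈ range K, F K (T^[j * K] x))
        = ∑ j ∈ range K, (K : ℝ)⁻¹ • fun x => F K (T^[j * K] x) := by
      funext x
      simp [Finset.mul_sum, Finset.sum_apply]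
    rw [heq]
    have hcomp : ∀ j : ℕ, eLpNorm (fun x => F K (T^[j * K] x)) 2 μ = eLpNorm (F K) 2 μ := by
      intro j
      exact eLpNorm_comp_measurePreserving (hFmeas K hK).aestronglyMeasurable
        (hT.iterate (j * K))
    calc eLpNorm (∑ j ∈ range K, (K : ℝ)⁻¹ • fun x => F K (T^[j * K] x)) 2 μ
        ≤ ∑ j ∈ range K, eLpNorm ((K : ℝ)⁻¹ • fun x => F K (T^[j * K] x)) 2 μ := by
          refine eLpNorm_sum_le (fun j _ => ?_) (by norm_num)
          exact ((hFKT j).const_smul _).aestronglyMeasurable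
      _ = ∑ j ∈ range K, (‖(K : ℝ)⁻¹‖₊ : ENNReal) * eLpNorm (F K) 2 μ := by
          refine Finset.sum_congr rfl fun j _ => ?_
          rw [eLpNorm_const_smul, hcomp j, enorm_eq_nnnorm]
      _ = (K : ENNReal) * ((‖(K : ℝ)⁻¹‖₊ : ENNReal) * eLpNorm (F K) 2 μ) := by
          rw [Finset.sum_const, Finset.card_range, nsmul_eq_mul]
      _ = eLpNorm (F K) 2 μ := by
          rw [← mul_assoc]
          have : (K : ENNReal) * (‖(K : ℝ)⁻¹‖₊ : ENNReal) = 1 := by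
            have h1 : (‖(K : ℝ)⁻¹‖₊ : ENNReal) = (K : ENNReal)⁻¹ := by
              rw [nnnorm_inv, ENNReal.coe_inv (by simp [hK.ne'])]
              congr 1
              simp [Real.nnnorm_natCast]
            rw [h1, ENNReal.mul_inv_cancel (by exact_mod_cast hK.ne') (by simp)]
          rw [this, one_mul]
  calc eLpNorm (F N) 2 μ
      ≤ _ := hgoal1
    _ ≤ _ := hgoal2
    _ ≤ eLpNorm (F K) 2 μ + ENNReal.ofReal (2 / Real.sqrt N) :=
        add_le_add_left hgoal3 _
end

section
/- Let $(X, \mathcal{F}, \mu, T)$ be a measure-preserving probability system, let $p \in (1, \infty)$, and let $f \in L^p(\mu)$ be real-valued. Then $\left\Vert \sup_{N \ge 1} \frac{1}{N}\sum_{n=1}^N f\circ T^n \right\Vert_p \le \frac{p}{p-1}\Vert f\Vert_p$. -/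
open Finset MeasureTheory
set_option linter.unusedSectionVars false

namespace ErgodicMaxAux

variable {X : Type*} [MeasurableSpace X]

/-- Birkhoff partial sums. -/
def S (T : X → X) (h : X → ℝ) (j : ℕ) (x : X) : ℝ := ∑ i ∈ Finset.range j, h (T^[i] x)

/-- Truncated maximal function of partial sums (including the zeroth sum `0`). -/
def M (T : X → X) (h : X → ℝ) : ℕ → X → ℝ
  | 0 => fun _ => 0
  | K + 1 => fun x => max (M T h K x) (S T h (K + 1) x)

lemma S_zero (T : X → X) (h : X → ℝ) (x : X) : S T h 0 x = 0 := by simp [S]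

lemma S_succ (T : X → X) (h : X → ℝ) (j : ℕ) (x : X) :
    S T h (j + 1) x = h x + S T h j (T x) := by
  simp only [S, Finset.sum_range_succ']
  simp [Function.iterate_succ_apply, add_comm]

lemma M_nonneg (T : X → X) (h : X → ℝ) (K : ℕ) (x : X) : 0 ≤ M T h K x := by
  induction K with
  | zero => exact le_refl 0
  | succ K ih => exact le_trans ih (le_max_left _ _)

lemma M_mono (T : X → X) (h : X → ℝ) {K L : ℕ} (hKL : K ≤ L) (x : X) :
    M T h K x ≤ M T h L x := by
  induction L with
  | zero => exact Nat.le_zero.mp hKL ▸ le_refl _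
  | succ L ih =>
    rcases Nat.le_succ_iff.mp hKL with h' | h'
    · exact le_trans (ih h') (le_max_left _ _)
    · exact h' ▸ le_refl _

lemma S_le_M (T : X → X) (h : X → ℝ) {j K : ℕ} (hjK : j ≤ K) (x : X) :
    S T h j x ≤ M T h K x := by
  induction K with
  | zero => simp_all [S_zero, M]
  | succ K ih =>
    rcases Nat.le_succ_iff.mp hjK with h' | h'
    · exact le_trans (ih h') (le_max_left _ _)
    · subst h'; exact le_max_right _ _

lemma M_le_max (T : X → X) (h : X → ℝ) (K : ℕ) (x : X) :
    M T h K x ≤ max 0 (h x + M T h K (T x)) := by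
  induction K with
  | zero => exact le_max_left _ _
  | succ K ih =>
    refine max_le ?_ ?_
    · refine le_trans ih (max_le (le_max_left _ _) ?_)
      refine le_trans (add_le_add_right (le_max_left (M T h K (T x)) _) _) (le_max_right _ _)
    · rw [S_succ]
      refine le_trans (add_le_add_right (S_le_M T h (Nat.le_succ K) (T x)) _) (le_max_right _ _)

lemma measurable_S {T : X → X} (hT : Measurable T) {h : X → ℝ} (hm : Measurable h)
    (j : ℕ) : Measurable (S T h j) :=
  Finset.measurable_sum _ fun i _ => hm.comp (hT.iterate i)

lemma measurable_M {T : X → X} (hT : Measurable T) {h : X → ℝ} (hm : Measurable h)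
    (K : ℕ) : Measurable (M T h K) := by
  induction K with
  | zero => exact measurable_const
  | succ K ih => exact ih.max (measurable_S hT hm (K + 1))


lemma memℒp_comp_iterate {μ : Measure X} {T : X → X} (hT : MeasurePreserving T μ μ)
    {h : X → ℝ} {q : ENNReal} (hh : MemLp h q μ) (n : ℕ) :
    MemLp (fun x => h (T^[n] x)) q μ :=
  hh.comp_measurePreserving (hT.iterate n)

lemma memℒp_S {μ : Measure X} {T : X → X} (hT : MeasurePreserving T μ μ)
    {h : X → ℝ} {q : ENNReal} (hh : MemLp h q μ) (j : ℕ) :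
    MemLp (S T h j) q μ :=
  memLp_finset_sum _ fun i _ => memℒp_comp_iterate hT hh i

lemma memℒp_max {μ : Measure X} {f g : X → ℝ} {q : ENNReal}
    (hf : MemLp f q μ) (hg : MemLp g q μ) :
    MemLp (fun x => max (f x) (g x)) q μ := by
  simpa [Pi.sup_def] using hf.sup hg

lemma memℒp_M {μ : Measure X} [IsFiniteMeasure μ] {T : X → X} (hT : MeasurePreserving T μ μ)
    {h : X → ℝ} {q : ENNReal} (hh : MemLp h q μ) (K : ℕ) :
    MemLp (M T h K) q μ := by
  induction K with
  | zero => exact memLp_const 0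
  | succ K ih => exact memℒp_max ih (memℒp_S hT hh (K + 1))

lemma integrable_M {μ : Measure X} [IsFiniteMeasure μ] {T : X → X} (hT : MeasurePreserving T μ μ)
    {h : X → ℝ} (hh : Integrable h μ) (K : ℕ) :
    Integrable (M T h K) μ :=
  memLp_one_iff_integrable.mp (memℒp_M hT (memLp_one_iff_integrable.mpr hh) K)

/-- **Garsia's maximal ergodic lemma**. -/
lemma garsia {μ : Measure X} [IsFiniteMeasure μ] {T : X → X} (hT : MeasurePreserving T μ μ)
    {h : X → ℝ} (hm : Measurable h) (hint : Integrable h μ) (K : ℕ) :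
    0 ≤ ∫ x in {x | 0 < M T h K x}, h x ∂μ := by
  set E : Set X := {x | 0 < M T h K x} with hE_def
  have hE : MeasurableSet E := measurableSet_lt measurable_const (measurable_M hT.measurable hm K)
  have intM : Integrable (M T h K) μ := integrable_M hT hint K
  have intMT : Integrable (fun x => M T h K (T x)) μ :=
    memLp_one_iff_integrable.mp
      ((memLp_one_iff_integrable.mpr intM).comp_measurePreserving hT)
  have keyineq : ∀ x, M T h K x - M T h K (T x) ≤ Set.indicator E h x := by
    intro x
    by_cases hx : x ∈ E
    · rw [Set.indicator_of_mem hx]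
      have h1 := M_le_max T h K x
      have h2 : M T h K x ≤ h x + M T h K (T x) := by
        rcases le_or_gt (h x + M T h K (T x)) 0 with hc | hc
        · rw [max_eq_left hc] at h1
          exact absurd (lt_of_lt_of_le hx h1) (lt_irrefl 0)
        · rwa [max_eq_right hc.le] at h1
      linarith
    · rw [Set.indicator_of_notMem hx]
      have h2 := M_nonneg T h K (T x)
      have h3 : M T h K x = 0 :=
        le_antisymm (not_lt.mp hx) (M_nonneg T h K x)
      linarith
  have hmap : ∫ x, M T h K (T x) ∂μ = ∫ x, M T h K x ∂μ := by
    have h4 : ∫ y, M T h K y ∂(Measure.map T μ) = ∫ x, M T h K (T x) ∂μ :=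
      integral_map hT.measurable.aemeasurable
        ((measurable_M hT.measurable hm K).aestronglyMeasurable)
    rw [hT.map_eq] at h4
    exact h4.symm
  have step : (0:ℝ) ≤ ∫ x, Set.indicator E h x ∂μ := by
    have h5 : ∫ x, (M T h K x - M T h K (T x)) ∂μ = 0 := by
      rw [integral_sub intM intMT, hmap, sub_self]
    calc (0:ℝ) = ∫ x, (M T h K x - M T h K (T x)) ∂μ := h5.symm
      _ ≤ ∫ x, Set.indicator E h x ∂μ :=
        integral_mono (intM.sub intMT) (hint.indicator hE) keyineq
  rwa [integral_indicator hE] at step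


/-- Ergodic averages. -/
noncomputable def A (T : X → X) (g : X → ℝ) (N : ℕ) (x : X) : ℝ := ((N : ℝ) + 1)⁻¹ * S T g (N + 1) x

/-- Truncated maximal ergodic averages. -/
noncomputable def D (T : X → X) (g : X → ℝ) : ℕ → X → ℝ
  | 0 => fun x => A T g 0 x
  | K + 1 => fun x => max (D T g K x) (A T g (K + 1) x)

lemma D_zero (T : X → X) (g : X → ℝ) (x : X) : D T g 0 x = A T g 0 x := rfl

lemma D_succ (T : X → X) (g : X → ℝ) (K : ℕ) (x : X) :
    D T g (K + 1) x = max (D T g K x) (A T g (K + 1) x) := rfl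

lemma measurable_A {T : X → X} (hT : Measurable T) {g : X → ℝ} (hm : Measurable g)
    (N : ℕ) : Measurable (A T g N) :=
  (measurable_S hT hm (N + 1)).const_mul _

lemma measurable_D {T : X → X} (hT : Measurable T) {g : X → ℝ} (hm : Measurable g)
    (K : ℕ) : Measurable (D T g K) := by
  induction K with
  | zero => exact measurable_A hT hm 0
  | succ K ih => exact ih.max (measurable_A hT hm (K + 1))

lemma A_nonneg {T : X → X} {g : X → ℝ} (hg : ∀ x, 0 ≤ g x) (N : ℕ) (x : X) :
    0 ≤ A T g N x := by
  refine mul_nonneg (inv_nonneg.mpr (by positivity)) ?_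
  exact Finset.sum_nonneg fun i _ => hg _

lemma D_nonneg {T : X → X} {g : X → ℝ} (hg : ∀ x, 0 ≤ g x) (K : ℕ) (x : X) :
    0 ≤ D T g K x := by
  induction K with
  | zero => exact A_nonneg hg 0 x
  | succ K ih => exact le_trans ih (le_max_left _ _)

lemma D_mono {T : X → X} {g : X → ℝ} {K L : ℕ} (hKL : K ≤ L) (x : X) :
    D T g K x ≤ D T g L x := by
  induction L with
  | zero => rw [Nat.le_zero.mp hKL]
  | succ L ih =>
    rcases Nat.le_succ_iff.mp hKL with h' | h'
    · exact le_trans (ih h') (by rw [D_succ]; exact le_max_left _ _)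
    · subst h'; exact le_refl _

lemma A_le_D {T : X → X} {g : X → ℝ} {N K : ℕ} (hNK : N ≤ K) (x : X) :
    A T g N x ≤ D T g K x := by
  induction K with
  | zero => rw [Nat.le_zero.mp hNK, D_zero]
  | succ K ih =>
    rw [D_succ]
    rcases Nat.le_succ_iff.mp hNK with h' | h'
    · exact le_trans (ih h') (le_max_left _ _)
    · subst h'; exact le_max_right _ _

lemma memℒp_D {μ : Measure X} {T : X → X} (hT : MeasurePreserving T μ μ)
    {g : X → ℝ} {q : ENNReal} (hg : MemLp g q μ) (K : ℕ) :
    MemLp (D T g K) q μ := by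
  induction K with
  | zero => exact (memℒp_S hT hg 1).const_mul _
  | succ K ih => exact memℒp_max ih ((memℒp_S hT hg (K + 2)).const_mul _)

lemma lt_D_iff {T : X → X} {g : X → ℝ} {K : ℕ} {t : ℝ} {x : X} :
    t < D T g K x ↔ ∃ N ≤ K, t < A T g N x := by
  induction K with
  | zero =>
    rw [D_zero]
    constructor
    · intro h; exact ⟨0, le_refl 0, h⟩
    · rintro ⟨N, hN, h⟩; rwa [Nat.le_zero.mp hN] at h
  | succ K ih =>
    rw [D_succ, lt_max_iff, ih]
    constructor
    · rintro (⟨N, hN, h⟩ | h)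
      · exact ⟨N, hN.trans (Nat.le_succ K), h⟩
      · exact ⟨K + 1, le_refl _, h⟩
    · rintro ⟨N, hN, h⟩
      rcases Nat.le_succ_iff.mp hN with h' | h'
      · exact Or.inl ⟨N, h', h⟩
      · subst h'; exact Or.inr h

lemma pos_M_iff {T : X → X} {h : X → ℝ} {K : ℕ} {x : X} :
    0 < M T h K x ↔ ∃ j ≤ K, 0 < S T h j x := by
  induction K with
  | zero =>
    simp only [M]
    constructor
    · intro hh; exact absurd hh (lt_irrefl 0)
    · rintro ⟨j, hj, hh⟩
      rw [Nat.le_zero.mp hj, S_zero] at hh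
      exact absurd hh (lt_irrefl 0)
  | succ K ih =>
    show 0 < max _ _ ↔ _
    rw [lt_max_iff, ih]
    constructor
    · rintro (⟨j, hj, hh⟩ | hh)
      · exact ⟨j, hj.trans (Nat.le_succ K), hh⟩
      · exact ⟨K + 1, le_refl _, hh⟩
    · rintro ⟨j, hj, hh⟩
      rcases Nat.le_succ_iff.mp hj with h' | h'
      · exact Or.inl ⟨j, h', hh⟩
      · subst h'; exact Or.inr hh

lemma S_sub_const (T : X → X) (g : X → ℝ) (t : ℝ) (j : ℕ) (x : X) :
    S T (fun y => g y - t) j x = S T g j x - j * t := by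
  simp [S, Finset.sum_sub_distrib, mul_comm]

lemma set_eq {T : X → X} {g : X → ℝ} {K : ℕ} {t : ℝ} :
    {x | t < D T g K x} = {x | 0 < M T (fun y => g y - t) (K + 1) x} := by
  ext x
  simp only [Set.mem_setOf_eq]
  rw [lt_D_iff, pos_M_iff]
  constructor
  · rintro ⟨N, hN, ht⟩
    refine ⟨N + 1, Nat.succ_le_succ hN, ?_⟩
    rw [S_sub_const, sub_pos]
    have hpos : (0:ℝ) < (N : ℝ) + 1 := by positivity
    rw [A, inv_mul_eq_div, lt_div_iff₀ hpos] at ht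
    calc ((N + 1 : ℕ) : ℝ) * t = t * ((N:ℝ) + 1) := by push_cast; ring
      _ < S T g (N + 1) x := ht
  · rintro ⟨j, hj, ht⟩
    match j with
    | 0 => rw [S_zero] at ht; exact absurd ht (lt_irrefl 0)
    | (N + 1) =>
      refine ⟨N, Nat.succ_le_succ_iff.mp hj, ?_⟩
      rw [S_sub_const, sub_pos] at ht
      have hpos : (0:ℝ) < (N : ℝ) + 1 := by positivity
      rw [A, inv_mul_eq_div, lt_div_iff₀ hpos]
      calc t * ((N:ℝ) + 1) = ((N + 1 : ℕ) : ℝ) * t := by push_cast; ring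
        _ < S T g (N + 1) x := ht

/-- The weak-type maximal ergodic inequality. -/
lemma weak_ineq {μ : Measure X} [IsProbabilityMeasure μ] {T : X → X}
    (hT : MeasurePreserving T μ μ) {g : X → ℝ} (hgm : Measurable g)
    (hg0 : ∀ x, 0 ≤ g x) (hgint : Integrable g μ) (K : ℕ) {t : ℝ} (ht : 0 < t) :
    ENNReal.ofReal t * μ {x | t < D T g K x} ≤
      ∫⁻ x in {x | t < D T g K x}, ENNReal.ofReal (g x) ∂μ := by
  set E : Set X := {x | t < D T g K x} with hE_def
  have hE : MeasurableSet E := measurableSet_lt measurable_const (measurable_D hT.measurable hgm K)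
  have hm : Measurable (fun y => g y - t) := hgm.sub measurable_const
  have hint : Integrable (fun y => g y - t) μ := hgint.sub (integrable_const t)
  have hgar := garsia hT hm hint (K + 1)
  rw [← set_eq (g := g) (K := K) (t := t), ← hE_def] at hgar
  have hsub : ∫ x in E, (g x - t) ∂μ = (∫ x in E, g x ∂μ) - (μ E).toReal * t := by
    rw [integral_sub hgint.integrableOn (integrable_const t).integrableOn]
    simp [setIntegral_const, smul_eq_mul, Measure.real]
  rw [hsub, sub_nonneg] at hgar
  calc ENNReal.ofReal t * μ E
      = ENNReal.ofReal (t * (μ E).toReal) := by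
        rw [ENNReal.ofReal_mul ht.le, ENNReal.ofReal_toReal (measure_ne_top μ E)]
    _ ≤ ENNReal.ofReal (∫ x in E, g x ∂μ) := by
        apply ENNReal.ofReal_le_ofReal
        calc t * (μ E).toReal = (μ E).toReal * t := mul_comm _ _
          _ ≤ ∫ x in E, g x ∂μ := hgar
    _ = ∫⁻ x in E, ENNReal.ofReal (g x) ∂μ :=
        ofReal_integral_eq_lintegral_ofReal hgint.integrableOn
          (Filter.Eventually.of_forall fun x => hg0 x)


/-- The `Lᵖ` bound for the truncated maximal function. -/
lemma D_bound {μ : Measure X} [IsProbabilityMeasure μ] {T : X → X}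
    (hT : MeasurePreserving T μ μ) {g : X → ℝ} (hgm : Measurable g)
    (hg0 : ∀ x, 0 ≤ g x) {p : ℝ} (hp1 : 1 < p)
    (hgp : MemLp g (ENNReal.ofReal p) μ) (K : ℕ) :
    (∫⁻ x, ENNReal.ofReal (D T g K x ^ p) ∂μ) ^ (1 / p) ≤
      ENNReal.ofReal (p / (p - 1)) * (∫⁻ x, ENNReal.ofReal (g x ^ p) ∂μ) ^ (1 / p) := by
  have hp0 : (0:ℝ) < p := lt_trans one_pos hp1
  have hp10 : (0:ℝ) < p - 1 := sub_pos.mpr hp1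
  have hgint : Integrable g μ := hgp.integrable (ENNReal.one_le_ofReal.mpr hp1.le)
  have hDm : Measurable (D T g K) := measurable_D hT.measurable hgm K
  have hD0 : ∀ x, 0 ≤ D T g K x := D_nonneg hg0 K
  set q : ℝ := p / (p - 1) with hq_def
  have hq0 : (0:ℝ) < q := div_pos hp0 hp10
  have hpq : p.HolderConjugate q := by
    exact (Real.holderConjugate_iff_eq_conjExponent hp1).mpr rfl
  set ν : Measure X := μ.withDensity (fun x => ENNReal.ofReal (g x)) with hν_def
  have hgm' : Measurable (fun x => ENNReal.ofReal (g x)) := hgm.ennreal_ofReal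
  set I : ENNReal := ∫⁻ x, ENNReal.ofReal (D T g K x ^ p) ∂μ with hI_def
  set G : ENNReal := ∫⁻ x, ENNReal.ofReal (g x ^ p) ∂μ with hG_def
  -- layer cake for μ
  have lay1 : I = ENNReal.ofReal p *
      ∫⁻ t in Set.Ioi (0:ℝ), μ {a | t < D T g K a} * ENNReal.ofReal (t ^ (p - 1)) :=
    lintegral_rpow_eq_lintegral_meas_lt_mul μ
      (Filter.Eventually.of_forall hD0) hDm.aemeasurable hp0
  -- layer cake for ν
  have lay2 : ∫⁻ x, ENNReal.ofReal (D T g K x ^ (p - 1)) ∂ν = ENNReal.ofReal (p - 1) *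
      ∫⁻ t in Set.Ioi (0:ℝ), ν {a | t < D T g K a} * ENNReal.ofReal (t ^ (p - 2)) := by
    have h2 := lintegral_rpow_eq_lintegral_meas_lt_mul ν
      (Filter.Eventually.of_forall hD0) hDm.aemeasurable hp10
    rw [show p - 1 - 1 = p - 2 by ring] at h2
    exact h2
  -- weak inequality : pointwise comparison of the layer-cake integrands
  have cmp : ∀ t ∈ Set.Ioi (0:ℝ),
      μ {a | t < D T g K a} * ENNReal.ofReal (t ^ (p - 1)) ≤
        ν {a | t < D T g K a} * ENNReal.ofReal (t ^ (p - 2)) := by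
    intro t ht
    have ht' : (0:ℝ) < t := ht
    have hEm : MeasurableSet {a | t < D T g K a} :=
      measurableSet_lt measurable_const hDm
    have hweak := weak_ineq hT hgm hg0 hgint K ht'
    rw [← withDensity_apply _ hEm, ← hν_def] at hweak
    have hsplit : ENNReal.ofReal (t ^ (p - 1)) =
        ENNReal.ofReal t * ENNReal.ofReal (t ^ (p - 2)) := by
      rw [← ENNReal.ofReal_mul ht'.le]
      congr 1
      have h3 : t ^ (p - 1) = t ^ (1:ℝ) * t ^ (p - 2) := by
        rw [← Real.rpow_add ht']; congr 1; ring
      rw [h3, Real.rpow_one]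
    calc μ {a | t < D T g K a} * ENNReal.ofReal (t ^ (p - 1))
        = (ENNReal.ofReal t * μ {a | t < D T g K a}) * ENNReal.ofReal (t ^ (p - 2)) := by
          rw [hsplit]; ring
      _ ≤ ν {a | t < D T g K a} * ENNReal.ofReal (t ^ (p - 2)) :=
          mul_le_mul_left hweak _
  -- combine
  have step1 : I ≤ ENNReal.ofReal q * ∫⁻ x, ENNReal.ofReal (D T g K x ^ (p - 1)) ∂ν := by
    calc I ≤ ENNReal.ofReal p *
        ∫⁻ t in Set.Ioi (0:ℝ), ν {a | t < D T g K a} * ENNReal.ofReal (t ^ (p - 2)) := by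
          rw [lay1]
          refine mul_le_mul_right ?_ _
          refine setLIntegral_mono' measurableSet_Ioi cmp
      _ = ENNReal.ofReal q * ∫⁻ x, ENNReal.ofReal (D T g K x ^ (p - 1)) ∂ν := by
          rw [lay2, ← mul_assoc]
          congr 1
          rw [hq_def, ENNReal.ofReal_div_of_pos hp10,
            ENNReal.div_mul_cancel (ENNReal.ofReal_pos.mpr hp10).ne' ENNReal.ofReal_ne_top]
  -- rewrite the ν-integral and apply Hölder
  have hDpm : Measurable (fun x => ENNReal.ofReal (D T g K x ^ (p - 1))) :=
    ((Real.continuous_rpow_const hp10.le).measurable.comp hDm).ennreal_ofReal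
  have hwd : ∫⁻ x, ENNReal.ofReal (D T g K x ^ (p - 1)) ∂ν =
      ∫⁻ x, ENNReal.ofReal (g x) * ENNReal.ofReal (D T g K x ^ (p - 1)) ∂μ := by
    rw [hν_def, lintegral_withDensity_eq_lintegral_mul μ hgm' hDpm]
    rfl
  have hold : ∫⁻ x, ENNReal.ofReal (g x) * ENNReal.ofReal (D T g K x ^ (p - 1)) ∂μ ≤
      G ^ (1 / p) * I ^ (1 / q) := by
    have h5 := ENNReal.lintegral_mul_le_Lp_mul_Lq μ hpq hgm'.aemeasurable hDpm.aemeasurable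
    simp only [Pi.mul_apply] at h5
    refine le_trans h5 ?_
    have e1 : ∫⁻ x, ENNReal.ofReal (g x) ^ p ∂μ = G := by
      rw [hG_def]
      exact lintegral_congr fun x => ENNReal.ofReal_rpow_of_nonneg (hg0 x) hp0.le
    have e2 : ∫⁻ x, ENNReal.ofReal (D T g K x ^ (p - 1)) ^ q ∂μ = I := by
      rw [hI_def]
      refine lintegral_congr fun x => ?_
      rw [ENNReal.ofReal_rpow_of_nonneg (Real.rpow_nonneg (hD0 x) _) hq0.le]
      congr 1
      rw [← Real.rpow_mul (hD0 x)]
      congr 1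
      rw [hq_def]
      field_simp
    rw [e1, e2]
  have main : I ≤ ENNReal.ofReal q * (G ^ (1 / p) * I ^ (1 / q)) := by
    refine le_trans step1 ?_
    rw [hwd]
    exact mul_le_mul_right hold _
  -- finiteness of I
  have hDmem : MemLp (D T g K) (ENNReal.ofReal p) μ := memℒp_D hT hgp K
  have hP0 : (ENNReal.ofReal p) ≠ 0 := (ENNReal.ofReal_pos.mpr hp0).ne'
  have hI_eq : I = (eLpNorm (D T g K) (ENNReal.ofReal p) μ) ^ p := by
    rw [eLpNorm_eq_lintegral_rpow_enorm_toReal hP0 ENNReal.ofReal_ne_top,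
      ENNReal.toReal_ofReal hp0.le, ← ENNReal.rpow_mul, one_div,
      inv_mul_cancel₀ hp0.ne', ENNReal.rpow_one, hI_def]
    refine lintegral_congr fun x => ?_
    rw [Real.enorm_eq_ofReal (hD0 x), ENNReal.ofReal_rpow_of_nonneg (hD0 x) hp0.le]
  have hI_top : I ≠ ⊤ := by
    rw [hI_eq]
    exact (ENNReal.rpow_lt_top_of_nonneg hp0.le hDmem.eLpNorm_ne_top).ne
  -- conclude
  by_cases hI0 : I = 0
  · rw [hI0, ENNReal.zero_rpow_of_pos (by positivity)]
    exact zero_le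
  · have hsplitI : I = I ^ (1 / p) * I ^ (1 / q) := by
      rw [← ENNReal.rpow_add _ _ hI0 hI_top]
      rw [show 1 / p + 1 / q = 1 from by
        have := hpq.inv_add_inv_eq_inv; rw [inv_one] at this
        rw [one_div, one_div]; exact this]
      exact (ENNReal.rpow_one I).symm
    have hcan : I ^ (1 / p) * I ^ (1 / q) ≤
        (ENNReal.ofReal (p / (p - 1)) * G ^ (1 / p)) * I ^ (1 / q) := by
      calc I ^ (1 / p) * I ^ (1 / q) = I := hsplitI.symm
        _ ≤ ENNReal.ofReal q * (G ^ (1 / p) * I ^ (1 / q)) := main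
        _ = (ENNReal.ofReal (p / (p - 1)) * G ^ (1 / p)) * I ^ (1 / q) := by
            rw [hq_def]; ring
    have hIq0 : I ^ (1 / q) ≠ 0 := by
      simp only [ne_eq, ENNReal.rpow_eq_zero_iff, not_or]
      constructor
      · rintro ⟨h, -⟩; exact hI0 h
      · rintro ⟨h, -⟩; exact hI_top h
    have hIqtop : I ^ (1 / q) ≠ ⊤ := by
      simp only [ne_eq, ENNReal.rpow_eq_top_iff, not_or]
      constructor
      · rintro ⟨h, -⟩; exact hI0 h
      · rintro ⟨h, -⟩; exact hI_top h
    exact (ENNReal.mul_le_mul_iff_left hIq0 hIqtop).mp hcan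


lemma ofReal_iSup_le {b : ℕ → ℝ} :
    ENNReal.ofReal (⨆ n, b n) ≤ ⨆ n, ENNReal.ofReal (b n) := by
  by_cases hb : BddAbove (Set.range b)
  · rcases eq_or_ne (⨆ n, ENNReal.ofReal (b n)) ⊤ with h | h
    · rw [h]; exact le_top
    · rw [ENNReal.ofReal_le_iff_le_toReal h]
      refine ciSup_le fun n => ?_
      rcases le_or_gt (b n) 0 with h0 | h0
      · exact h0.trans ENNReal.toReal_nonneg
      · calc b n = (ENNReal.ofReal (b n)).toReal := (ENNReal.toReal_ofReal h0.le).symm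
          _ ≤ _ := ENNReal.toReal_mono h (le_iSup (fun n => ENNReal.ofReal (b n)) n)
  · rw [Real.iSup_of_not_bddAbove hb]
    simp

lemma sum_Icc_eq_S (T : X → X) (F : X → ℝ) (N : ℕ) (x : X) :
    ∑ n ∈ Finset.Icc 1 (N + 1), F (T^[n] x) = S T (fun y => F (T y)) (N + 1) x := by
  simp only [S]
  rw [← Finset.Ico_add_one_right_eq_Icc, Finset.sum_Ico_eq_sum_range]
  have hcard : N + 1 + 1 - 1 = N + 1 := by omega
  rw [hcard]
  refine Finset.sum_congr rfl fun i _ => ?_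
  rw [Nat.add_comm 1 i, Function.iterate_succ_apply']

lemma abs_avg_le (T : X → X) (f : X → ℝ) (N : ℕ) (x : X) :
    |((N : ℝ) + 1)⁻¹ * ∑ n ∈ Finset.Icc 1 (N + 1), f (T^[n] x)| ≤
      A T (fun y => |f (T y)|) N x := by
  have hinv : (0:ℝ) ≤ ((N : ℝ) + 1)⁻¹ := by positivity
  rw [A, abs_mul, abs_of_nonneg hinv]
  refine mul_le_mul_of_nonneg_left ?_ hinv
  calc |∑ n ∈ Finset.Icc 1 (N + 1), f (T^[n] x)|
      ≤ ∑ n ∈ Finset.Icc 1 (N + 1), |f (T^[n] x)| := Finset.abs_sum_le_sum_abs _ _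
    _ = S T (fun y => |f (T y)|) (N + 1) x := sum_Icc_eq_S T (fun y => |f y|) N x

end ErgodicMaxAux

open ErgodicMaxAux in
/-- The `Lᵖ` maximal inequality for ergodic averages with constant `p/(p-1)`. -/
theorem ergodic_maximal_inequality (X : Type*) [MeasurableSpace X] (μ : Measure X)
    [IsProbabilityMeasure μ] (T : X → X) (hT : MeasurePreserving T μ μ)
    (p : ℝ) (hp1 : 1 < p) (f : X → ℝ) (hf : Measurable f)
    (hfp : MemLp f (ENNReal.ofReal p) μ) :
    eLpNorm (fun x => ⨆ N : ℕ, ((N : ℝ) + 1)⁻¹ * ∑ n ∈ Icc 1 (N + 1), f (T^[n] x))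
        (ENNReal.ofReal p) μ ≤
      ENNReal.ofReal (p / (p - 1)) * eLpNorm f (ENNReal.ofReal p) μ := by
  have hp0 : (0:ℝ) < p := lt_trans one_pos hp1
  have hP0 : (ENNReal.ofReal p) ≠ 0 := (ENNReal.ofReal_pos.mpr hp0).ne'
  set g : X → ℝ := fun x => |f (T x)| with hg_def
  have hgm : Measurable g := (hf.comp hT.measurable).abs
  have hg0 : ∀ x, 0 ≤ g x := fun x => abs_nonneg _
  have hgp : MemLp g (ENNReal.ofReal p) μ := by
    have h1 := (hfp.abs).comp_measurePreserving hT
    simpa [Function.comp_def] using h1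
  set b : ℕ → X → ℝ :=
    fun N x => ((N : ℝ) + 1)⁻¹ * ∑ n ∈ Icc 1 (N + 1), f (T^[n] x) with hb_def
  set C := ENNReal.ofReal (p / (p - 1)) with hC_def
  set G : ENNReal := ∫⁻ x, ENNReal.ofReal (g x ^ p) ∂μ with hG_def
  -- identification of the ℒᵖ norm of g with G and with f
  have hG_eq : G ^ (1 / p) = eLpNorm f (ENNReal.ofReal p) μ := by
    have e1 : G = ∫⁻ x, (‖g x‖₊ : ENNReal) ^ p ∂μ := by
      refine lintegral_congr fun x => ?_
      rw [← enorm_eq_nnnorm, Real.enorm_eq_ofReal (hg0 x), ENNReal.ofReal_rpow_of_nonneg (hg0 x) hp0.le]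
    have e2 : G ^ (1 / p) = eLpNorm g (ENNReal.ofReal p) μ := by
      rw [eLpNorm_eq_lintegral_rpow_enorm_toReal hP0 ENNReal.ofReal_ne_top,
        ENNReal.toReal_ofReal hp0.le, e1]
      simp only [enorm_eq_nnnorm]
    have e3 : eLpNorm g (ENNReal.ofReal p) μ = eLpNorm (fun y => |f y|) (ENNReal.ofReal p) μ := by
      have := eLpNorm_comp_measurePreserving (g := fun y => |f y|) (p := ENNReal.ofReal p)
        (hf.abs.aestronglyMeasurable) hT
      simpa [Function.comp_def] using this
    have e4 : eLpNorm (fun y => |f y|) (ENNReal.ofReal p) μ = eLpNorm f (ENNReal.ofReal p) μ := by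
      simpa [Real.norm_eq_abs] using eLpNorm_norm (p := ENNReal.ofReal p) (μ := μ) f
    rw [e2, e3, e4]
  -- pointwise comparison with the truncated maximal functions
  have base : ∀ x, (‖⨆ N : ℕ, b N x‖₊ : ENNReal) ≤ ⨆ K : ℕ, ENNReal.ofReal (D T g K x) := by
    intro x
    have habs : (‖⨆ N : ℕ, b N x‖₊ : ENNReal) = ENNReal.ofReal |⨆ N : ℕ, b N x| := by
      rw [← Real.nnnorm_abs]
      exact Real.enorm_eq_ofReal (abs_nonneg _)
    rw [habs]
    by_cases hbdd : BddAbove (Set.range fun N => b N x)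
    · have hbA : ∀ N, |b N x| ≤ A T g N x := fun N => abs_avg_le T f N x
      have h1 : ENNReal.ofReal (⨆ N : ℕ, b N x) ≤ ⨆ K : ℕ, ENNReal.ofReal (D T g K x) := by
        refine le_trans ofReal_iSup_le (iSup_le fun N => ?_)
        refine le_trans (ENNReal.ofReal_le_ofReal ?_) (le_iSup (fun K => ENNReal.ofReal (D T g K x)) N)
        exact le_trans (le_abs_self _) ((hbA N).trans (A_le_D (le_refl N) x))
      have h2 : ENNReal.ofReal (-(⨆ N : ℕ, b N x)) ≤ ⨆ K : ℕ, ENNReal.ofReal (D T g K x) := by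
        have hb0 : b 0 x ≤ ⨆ N : ℕ, b N x := le_ciSup hbdd 0
        refine le_trans (ENNReal.ofReal_le_ofReal ?_) (le_iSup (fun K => ENNReal.ofReal (D T g K x)) 0)
        calc -(⨆ N : ℕ, b N x) ≤ -(b 0 x) := neg_le_neg hb0
          _ ≤ |b 0 x| := neg_le_abs _
          _ ≤ A T g 0 x := hbA 0
          _ ≤ D T g 0 x := A_le_D (le_refl 0) x
      rw [abs_eq_max_neg]
      rw [(show Monotone ENNReal.ofReal from fun _ _ h => ENNReal.ofReal_le_ofReal h).map_max]
      exact max_le h1 h2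
    · rw [Real.iSup_of_not_bddAbove hbdd]
      simp
  have key : ∀ x, (‖⨆ N : ℕ, b N x‖₊ : ENNReal) ^ p ≤
      ⨆ K : ℕ, ENNReal.ofReal (D T g K x ^ p) := by
    intro x
    have h3 := ENNReal.rpow_le_rpow (base x) hp0.le
    refine le_trans h3 (le_of_eq ?_)
    rw [Monotone.map_iSup_of_continuousAt (f := fun a : ENNReal => a ^ p)
      ENNReal.continuous_rpow_const.continuousAt
      (fun a b hab => ENNReal.rpow_le_rpow hab hp0.le)
      (by simpa using ENNReal.zero_rpow_of_pos hp0)]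
    exact iSup_congr fun K => ENNReal.ofReal_rpow_of_nonneg (D_nonneg hg0 K x) hp0.le
  -- integrate
  have hDK_meas : ∀ K : ℕ, Measurable (fun x => ENNReal.ofReal (D T g K x ^ p)) := fun K =>
    ((Real.continuous_rpow_const hp0.le).measurable.comp (measurable_D hT.measurable hgm K)).ennreal_ofReal
  have hDK_mono : Monotone (fun K : ℕ => fun x => ENNReal.ofReal (D T g K x ^ p)) := by
    intro K L hKL x
    exact ENNReal.ofReal_le_ofReal
      (Real.rpow_le_rpow (D_nonneg hg0 K x) (D_mono hKL x) hp0.le)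
  have step : ∫⁻ x, (‖⨆ N : ℕ, b N x‖₊ : ENNReal) ^ p ∂μ ≤ (C * G ^ (1 / p)) ^ p := by
    calc ∫⁻ x, (‖⨆ N : ℕ, b N x‖₊ : ENNReal) ^ p ∂μ
        ≤ ∫⁻ x, ⨆ K : ℕ, ENNReal.ofReal (D T g K x ^ p) ∂μ := lintegral_mono key
      _ = ⨆ K : ℕ, ∫⁻ x, ENNReal.ofReal (D T g K x ^ p) ∂μ := lintegral_iSup hDK_meas hDK_mono
      _ ≤ (C * G ^ (1 / p)) ^ p := by
          refine iSup_le fun K => ?_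
          have h4 := ENNReal.rpow_le_rpow (D_bound hT hgm hg0 hp1 hgp K) hp0.le
          rw [← ENNReal.rpow_mul, one_div, inv_mul_cancel₀ hp0.ne', ENNReal.rpow_one] at h4
          rw [hC_def, hG_def, one_div]
          exact h4
  -- conclude
  have final : eLpNorm (fun x => ⨆ N : ℕ, b N x) (ENNReal.ofReal p) μ ≤ C * G ^ (1 / p) := by
    rw [eLpNorm_eq_lintegral_rpow_enorm_toReal hP0 ENNReal.ofReal_ne_top,
      ENNReal.toReal_ofReal hp0.le]
    calc (∫⁻ x, (‖⨆ N : ℕ, b N x‖₊ : ENNReal) ^ p ∂μ) ^ (1 / p)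
        ≤ ((C * G ^ (1 / p)) ^ p) ^ (1 / p) := ENNReal.rpow_le_rpow step (by positivity)
      _ = C * G ^ (1 / p) := by
          rw [← ENNReal.rpow_mul, mul_one_div, div_self hp0.ne', ENNReal.rpow_one]
  rw [← hG_eq]
  exact final
end
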